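/- arXiv:1801.00379 — 15 statements merged into one kernel-verified Lean document; each statement's English description precedes it below -/
import Mathlib

section
/- Let K be an algebraically closed field, and let n ≥ 1, m ≥ 1. Let w be a word with constants in SL_n(K), i.e. an element of the free product (FreeGroup over Fin m) ∗ SL_n(K), with evaluation map w̃ : SL_n(K)^m → SL_n(K) sending a tuple (g_1,…,g_m) to the image of w under the group homomorphism that maps the i-th free generator to g_i and each constant of SL_n(K) to itself. For 1 ≤ i ≤ n let χ_i(X) ∈ K denote the coefficient of λ^{n−i} in the characteristic polynomial of the matrix X. Then for each i, the function SL_n(K)^m → K given by (g_1,…,g_m) ↦ χ_i(w̃(g_1,…,g_m)) is either a constant function or takes every value of K. -/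
open Matrix Polynomial

namespace CharpolyWordAux

variable {K : Type*} [Field K] {N : Type*} [DecidableEq N] [Fintype N]

theorem map_transvection {S : Type*} [CommRing S] (i j : N) (c : K[X])
    (ψ : K[X] →+* S) : (Matrix.transvection i j c).map ψ = Matrix.transvection i j (ψ c) := by
  ext a b
  simp [Matrix.transvection, Matrix.single, Matrix.one_apply, apply_ite ψ]

theorem whitehead (k l : N) (hkl : k ≠ l) (u : K) (hu : u ≠ 0) :
    transvection k l u * (transvection l k (-u⁻¹) * (transvection k l u *
      (transvection k l (-1) * (transvection l k 1 * (transvection k l (-1) * 1))))) =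
    diagonal (fun x => if x = k then u else if x = l then u⁻¹ else 1) := by
  have trv : ∀ (i j : N) (c : K) (a b : N), transvection i j c a b
      = (if a = b then 1 else 0) + (if i = a ∧ j = b then c else 0) := by
    intro i j c a b
    simp [Matrix.transvection, Matrix.add_apply, Matrix.one_apply, Matrix.single]
  ext a b
  rcases eq_or_ne a k with hak | hak <;> rcases eq_or_ne a l with hal | hal <;>
    rcases eq_or_ne b k with hbk | hbk <;> rcases eq_or_ne b l with hbl | hbl <;>
    simp_all [Matrix.transvection_mul_apply_same, Matrix.transvection_mul_apply_of_ne,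
      Matrix.mul_one, Matrix.diagonal_apply, trv, Ne.symm]

/-- A diagonal element of the special linear group. -/
def dElt (d : N → K) (h : det (diagonal d) = 1) : Matrix.SpecialLinearGroup N K :=
  ⟨diagonal d, h⟩

/-- The subgroup of points of `SL_N(K)` connected to `1` by a polynomial curve. -/
def H (K : Type*) [Field K] (N : Type*) [DecidableEq N] [Fintype N] :
    Subgroup (Matrix.SpecialLinearGroup N K) where
  carrier := {x | ∃ γ : Matrix.SpecialLinearGroup N K[X],
    Matrix.SpecialLinearGroup.map (evalRingHom 0) γ = 1 ∧
    Matrix.SpecialLinearGroup.map (evalRingHom 1) γ = x}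
  one_mem' := ⟨1, by simp, by simp⟩
  mul_mem' := by
    rintro x y ⟨γ, hγ0, hγ1⟩ ⟨δ, hδ0, hδ1⟩
    exact ⟨γ * δ, by simp [hγ0, hδ0], by simp [hγ1, hδ1]⟩
  inv_mem' := by
    rintro x ⟨γ, hγ0, hγ1⟩
    exact ⟨γ⁻¹, by simp [hγ0], by simp [hγ1]⟩

theorem whitehead' (k l : N) (hkl : k ≠ l) (u : K) (hu : u ≠ 0) :
    transvection k l u * (transvection l k (-u⁻¹) * (transvection k l u *
      (transvection k l (-1) * (transvection l k 1 * transvection k l (-1))))) =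
    diagonal (fun x => if x = k then u else if x = l then u⁻¹ else 1) := by
  simpa using whitehead k l hkl u hu

/-- The transvection as an element of the special linear group. -/
def T (a b : N) (hab : a ≠ b) (c : K) : Matrix.SpecialLinearGroup N K :=
  ⟨transvection a b c, det_transvection_of_ne a b hab c⟩

theorem transvection_mem (i j : N) (hij : i ≠ j) (c : K) :
    T i j hij c ∈ H K N := by
  refine ⟨⟨transvection i j (Polynomial.C c * Polynomial.X),
    det_transvection_of_ne i j hij _⟩, ?_, ?_⟩ <;>
  · apply Subtype.ext
    change (transvection i j (Polynomial.C c * Polynomial.X)).map _ = _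
    rw [map_transvection]
    simp [T]

theorem block_mem (k l : N) (hkl : k ≠ l) (u : K) (hu : u ≠ 0)
    (h : det (diagonal fun x => if x = k then u else if x = l then u⁻¹ else 1) = 1) :
    (⟨diagonal fun x => if x = k then u else if x = l then u⁻¹ else 1, h⟩ :
      Matrix.SpecialLinearGroup N K) ∈ H K N := by
  have key :
      (⟨diagonal fun x => if x = k then u else if x = l then u⁻¹ else 1, h⟩ :
        Matrix.SpecialLinearGroup N K)
      = T k l hkl u * (T l k hkl.symm (-u⁻¹) * (T k l hkl u *
        (T k l hkl (-1) * (T l k hkl.symm 1 * T k l hkl (-1))))) := by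
    apply Subtype.ext
    simp only [Matrix.SpecialLinearGroup.coe_mul, T]
    exact (whitehead' k l hkl u hu).symm
  rw [key]
  exact mul_mem (transvection_mem _ _ hkl _)
    (mul_mem (transvection_mem _ _ hkl.symm _)
    (mul_mem (transvection_mem _ _ hkl _)
    (mul_mem (transvection_mem _ _ hkl _)
    (mul_mem (transvection_mem _ _ hkl.symm _)
    (transvection_mem _ _ hkl _)))))

theorem diag_mem_aux (hK : DecidableEq K) (M : ℕ) : ∀ (d : N → K), (∏ j, d j) = 1 →
    (Finset.univ.filter fun j => d j ≠ 1).card ≤ M →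
    ∀ (h : det (diagonal d) = 1),
    (⟨diagonal d, h⟩ : Matrix.SpecialLinearGroup N K) ∈ H K N := by
  induction M with
  | zero =>
    intro d hd hcard h
    have hall : ∀ j, d j = 1 := by
      intro j
      by_contra hj
      have : j ∈ Finset.univ.filter fun j => d j ≠ 1 := by simp [hj]
      have := Finset.card_pos.mpr ⟨j, this⟩
      omega
    have hDd : diagonal d = (1 : Matrix N N K) := by
      rw [show d = fun _ => (1 : K) from funext hall]; exact diagonal_one
    have hone : (⟨diagonal d, h⟩ : Matrix.SpecialLinearGroup N K)
        = (1 : Matrix.SpecialLinearGroup N K) := Subtype.ext (by simp [hDd])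
    rw [hone]; exact one_mem _
  | succ M IH =>
    intro d hd hcard h
    by_cases hall : ∀ j, d j = 1
    · have hDd : diagonal d = (1 : Matrix N N K) := by
        rw [show d = fun _ => (1 : K) from funext hall]; exact diagonal_one
      have hone : (⟨diagonal d, h⟩ : Matrix.SpecialLinearGroup N K)
          = (1 : Matrix.SpecialLinearGroup N K) := Subtype.ext (by simp [hDd])
      rw [hone]; exact one_mem _
    push_neg at hall
    obtain ⟨k, hk⟩ := hall
    have hne : ∀ j, d j ≠ 0 := by
      intro j hj
      rw [Finset.prod_eq_zero (Finset.mem_univ j) hj] at hd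
      exact zero_ne_one hd
    have hl : ∃ l, l ≠ k ∧ d l ≠ 1 := by
      by_contra hno
      push_neg at hno
      have : ∏ j, d j = d k :=
        Finset.prod_eq_single k (fun b _ hb => hno b hb) (fun hnk => absurd (Finset.mem_univ k) hnk)
      exact hk (this ▸ hd)
    obtain ⟨l, hlk, hl1⟩ := hl
    have hkl : k ≠ l := hlk.symm
    set d' : N → K := fun x => if x = k then 1 else if x = l then d k * d l else d x with hd'def
    -- the product over the complement of {k, l}
    have hmem_l : l ∈ Finset.univ.erase k := Finset.mem_erase.mpr ⟨hlk, Finset.mem_univ l⟩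
    have hrest : ∏ j ∈ (Finset.univ.erase k).erase l, d' j
        = ∏ j ∈ (Finset.univ.erase k).erase l, d j := by
      refine Finset.prod_congr rfl fun x hx => ?_
      rcases Finset.mem_erase.mp hx with ⟨hxl, hx'⟩
      rcases Finset.mem_erase.mp hx' with ⟨hxk, -⟩
      simp [hd'def, hxl, hxk]
    have hprod_d : d k * (d l * ∏ j ∈ (Finset.univ.erase k).erase l, d j) = 1 := by
      rw [Finset.mul_prod_erase _ _ hmem_l, Finset.mul_prod_erase _ _ (Finset.mem_univ k)]
      exact hd
    have hd'prod : ∏ j, d' j = 1 := by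
      rw [← Finset.mul_prod_erase _ _ (Finset.mem_univ k),
        ← Finset.mul_prod_erase _ _ hmem_l, hrest]
      have e1 : d' k = 1 := by simp [hd'def]
      have e2 : d' l = d k * d l := by simp [hd'def, hlk]
      rw [e1, e2, one_mul, mul_assoc]
      exact hprod_d
    have hcard' : (Finset.univ.filter fun j => d' j ≠ 1).card ≤ M := by
      have hsub : (Finset.univ.filter fun j => d' j ≠ 1) ⊆
          (Finset.univ.filter fun j => d j ≠ 1).erase k := by
        intro x hx
        rcases Finset.mem_filter.mp hx with ⟨-, hx1⟩
        have hxk : x ≠ k := by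
          intro hxe; apply hx1; simp [hd'def, hxe]
        refine Finset.mem_erase.mpr ⟨hxk, Finset.mem_filter.mpr ⟨Finset.mem_univ x, ?_⟩⟩
        rcases eq_or_ne x l with hxl | hxl
        · exact hxl ▸ hl1
        · intro hdx; apply hx1; simp [hd'def, hxk, hxl, hdx]
      have hkmem : k ∈ Finset.univ.filter fun j => d j ≠ 1 := by simp [hk]
      have := Finset.card_le_card hsub
      rw [Finset.card_erase_of_mem hkmem] at this
      have hpos := Finset.card_pos.mpr ⟨k, hkmem⟩
      have hcard2 : (Finset.univ.filter fun j => d j ≠ 1).card ≤ M + 1 := by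
        convert hcard using 2
      omega
    have hdet' : det (diagonal d') = 1 := by rw [det_diagonal]; exact hd'prod
    have hmem' := IH d' hd'prod hcard' hdet'
    have hdetb : det (diagonal fun x => if x = k then d k else if x = l then (d k)⁻¹ else 1)
        = 1 := by
      rw [det_diagonal, ← Finset.mul_prod_erase _ _ (Finset.mem_univ k),
        ← Finset.mul_prod_erase _ _ hmem_l]
      rw [if_pos rfl, if_neg hlk, if_pos rfl]
      rw [Finset.prod_eq_one]
      · rw [mul_one]; exact mul_inv_cancel₀ (hne k)
      · intro x hx
        rcases Finset.mem_erase.mp hx with ⟨hxl, hx'⟩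
        rcases Finset.mem_erase.mp hx' with ⟨hxk, -⟩
        simp [hxk, hxl]
    have hblock := block_mem k l hkl (d k) (hne k) hdetb
    have hfun : d = fun i => (if i = k then d k else if i = l then (d k)⁻¹ else 1) * d' i := by
      funext x
      rcases eq_or_ne x k with hxk | hxk
      · subst hxk; simp [hd'def, hkl]
      · rcases eq_or_ne x l with hxl | hxl
        · subst hxl
          have e1 : (if x = k then d k else if x = x then (d k)⁻¹ else 1) = (d k)⁻¹ := by
            simp [hxk]
          have e2 : d' x = d k * d x := by simp [hd'def, hxk]
          rw [e1, e2, ← mul_assoc, inv_mul_cancel₀ (hne k), one_mul]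
        · simp [hd'def, hxk, hxl]
    have hfac : dElt d h
        = dElt (fun x => if x = k then d k else if x = l then (d k)⁻¹ else 1) hdetb *
          dElt d' hdet' := by
      apply Subtype.ext
      simp only [Matrix.SpecialLinearGroup.coe_mul, dElt, diagonal_mul_diagonal]
      exact (congrArg diagonal hfun).trans (diagonal_mul_diagonal _ _).symm
    show dElt d h ∈ H K N
    rw [hfac]
    exact mul_mem hblock hmem'

theorem diag_mem (d : N → K) (h : det (diagonal d) = 1) :
    (⟨diagonal d, h⟩ : Matrix.SpecialLinearGroup N K) ∈ H K N := by
  have hd : ∏ j, d j = 1 := by rwa [det_diagonal] at h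
  classical
  exact diag_mem_aux (Classical.decEq K) _ d hd le_rfl h

/-- A transvection structure as an element of the special linear group. -/
def Tst (t : TransvectionStruct N K) : Matrix.SpecialLinearGroup N K :=
  ⟨t.toMatrix, t.det⟩

theorem Tst_mem (t : TransvectionStruct N K) : Tst t ∈ H K N := by
  rcases t with ⟨i, j, hij, c⟩
  exact transvection_mem i j hij c

theorem coe_list_prod (L : List (Matrix.SpecialLinearGroup N K)) :
    ((L.prod : Matrix.SpecialLinearGroup N K) : Matrix N N K) = (L.map (↑·)).prod := by
  induction L with
  | nil => simp
  | cons a L ih => simp [ih]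

theorem mem_H (x : Matrix.SpecialLinearGroup N K) : x ∈ H K N := by
  obtain ⟨L, L', D, hM⟩ :=
    Pivot.exists_list_transvec_mul_diagonal_mul_list_transvec (x : Matrix N N K)
  have hdetD : det (diagonal D) = 1 := by
    have hdx : det (x : Matrix N N K) = 1 := x.prop
    rw [hM, det_mul, det_mul, TransvectionStruct.det_toMatrix_prod,
      TransvectionStruct.det_toMatrix_prod, one_mul, mul_one] at hdx
    exact hdx
  have hx : x = (L.map Tst).prod * ⟨diagonal D, hdetD⟩ * (L'.map Tst).prod := by
    apply Subtype.ext
    simp only [Matrix.SpecialLinearGroup.coe_mul, coe_list_prod, List.map_map]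
    rw [hM]
    congr 1
    change _ = ((L.map Tst).prod : Matrix N N K) * diagonal D
    rw [coe_list_prod, List.map_map]
    rfl
  rw [hx]
  refine mul_mem (mul_mem ?_ (diag_mem D hdetD)) ?_ <;>
    exact Subgroup.list_prod_mem _ (by
      intro a ha
      rcases List.mem_map.mp ha with ⟨t, -, rfl⟩
      exact Tst_mem t)

end CharpolyWordAux

/-- Theorem (words with constants and coefficients of the characteristic polynomial):
for a word with constants `w` in `SL_n(K)` (an element of the free product of the free
group on `m` generators with `SL_n(K)`), each coefficient function
`(g₁,…,g_m) ↦ χ_i(w̃(g₁,…,g_m))` (the coefficient of `λ^(n-i)` in the characteristic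
polynomial of the evaluation) is either constant or takes every value of `K`. -/
theorem charpoly_coeff_of_word_with_constants_constant_or_surjective
    (K : Type*) [Field K] [IsAlgClosed K] (n m : ℕ) (hn : 1 ≤ n) (hm : 1 ≤ m)
    (w : Monoid.Coprod (FreeGroup (Fin m)) (Matrix.SpecialLinearGroup (Fin n) K))
    (i : ℕ) (hi : 1 ≤ i) (hin : i ≤ n) :
    (∀ g g' : Fin m → Matrix.SpecialLinearGroup (Fin n) K,
        (((Monoid.Coprod.lift (FreeGroup.lift g) (MonoidHom.id _)) w :
            Matrix.SpecialLinearGroup (Fin n) K) : Matrix (Fin n) (Fin n) K).charpoly.coeff (n - i)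
          = (((Monoid.Coprod.lift (FreeGroup.lift g') (MonoidHom.id _)) w :
            Matrix.SpecialLinearGroup (Fin n) K) : Matrix (Fin n) (Fin n) K).charpoly.coeff (n - i))
    ∨ (∀ a : K, ∃ g : Fin m → Matrix.SpecialLinearGroup (Fin n) K,
        (((Monoid.Coprod.lift (FreeGroup.lift g) (MonoidHom.id _)) w :
            Matrix.SpecialLinearGroup (Fin n) K) : Matrix (Fin n) (Fin n) K).charpoly.coeff (n - i)
          = a) := by
  by_cases hsurj : ∀ a : K, ∃ g : Fin m → Matrix.SpecialLinearGroup (Fin n) K,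
      (((Monoid.Coprod.lift (FreeGroup.lift g) (MonoidHom.id _)) w :
          Matrix.SpecialLinearGroup (Fin n) K) : Matrix (Fin n) (Fin n) K).charpoly.coeff (n - i)
        = a
  · exact Or.inr hsurj
  left
  push_neg at hsurj
  obtain ⟨a, ha⟩ := hsurj
  set ι : Matrix.SpecialLinearGroup (Fin n) K →* Matrix.SpecialLinearGroup (Fin n) K[X] :=
    Matrix.SpecialLinearGroup.map (Polynomial.C : K →+* K[X]) with hι
  have hEvι : ∀ (t : K) (x : Matrix.SpecialLinearGroup (Fin n) K),
      Matrix.SpecialLinearGroup.map (evalRingHom t) (ι x) = x := by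
    intro t x
    apply Subtype.ext
    simp only [hι, Matrix.SpecialLinearGroup.map_apply_coe, RingHom.mapMatrix_apply,
      Matrix.map_map]
    ext a b
    simp
  have natur : ∀ (gq : Fin m → Matrix.SpecialLinearGroup (Fin n) K[X]) (t : K),
      Monoid.Coprod.lift
          (FreeGroup.lift fun j => Matrix.SpecialLinearGroup.map (evalRingHom t) (gq j))
          (MonoidHom.id _) w
        = Matrix.SpecialLinearGroup.map (evalRingHom t)
            (Monoid.Coprod.lift (FreeGroup.lift gq) ι w) := by
    intro gq t
    have h1 : (Matrix.SpecialLinearGroup.map (evalRingHom t)).comp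
          (Monoid.Coprod.lift (FreeGroup.lift gq) ι)
        = Monoid.Coprod.lift
            (FreeGroup.lift fun j => Matrix.SpecialLinearGroup.map (evalRingHom t) (gq j))
            (MonoidHom.id _) := by
      rw [Monoid.Coprod.comp_lift]
      congr 1
      · exact FreeGroup.ext_hom _ _ fun j => by simp
      · exact MonoidHom.ext fun x => hEvι t x
    exact (DFunLike.congr_fun h1 w).symm
  have coeff_eq : ∀ (gq : Fin m → Matrix.SpecialLinearGroup (Fin n) K[X]) (t : K),
      (((Monoid.Coprod.lift
            (FreeGroup.lift fun j => Matrix.SpecialLinearGroup.map (evalRingHom t) (gq j))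
            (MonoidHom.id _)) w : Matrix.SpecialLinearGroup (Fin n) K) :
          Matrix (Fin n) (Fin n) K).charpoly.coeff (n - i)
        = ((((Monoid.Coprod.lift (FreeGroup.lift gq) ι) w :
              Matrix.SpecialLinearGroup (Fin n) K[X]) :
            Matrix (Fin n) (Fin n) K[X]).charpoly.coeff (n - i)).eval t := by
    intro gq t
    rw [natur, Matrix.SpecialLinearGroup.map_apply_coe, RingHom.mapMatrix_apply,
      Matrix.charpoly_map]
    simp [Polynomial.coeff_map]
  intro g g'
  have hcurve : ∀ j, ∃ γ : Matrix.SpecialLinearGroup (Fin n) K[X],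
      Matrix.SpecialLinearGroup.map (evalRingHom 0) γ = 1 ∧
      Matrix.SpecialLinearGroup.map (evalRingHom 1) γ = g' j * (g j)⁻¹ :=
    fun j => CharpolyWordAux.mem_H (g' j * (g j)⁻¹)
  choose γ hγ0 hγ1 using hcurve
  set gq : Fin m → Matrix.SpecialLinearGroup (Fin n) K[X] := fun j => γ j * ι (g j) with hgq
  have e0 : (fun j => Matrix.SpecialLinearGroup.map (evalRingHom 0) (gq j)) = g :=
    funext fun j => by rw [hgq, _root_.map_mul, hγ0, hEvι, one_mul]
  have e1 : (fun j => Matrix.SpecialLinearGroup.map (evalRingHom 1) (gq j)) = g' :=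
    funext fun j => by rw [hgq, _root_.map_mul, hγ1, hEvι, inv_mul_cancel_right]
  set P : K[X] := (((Monoid.Coprod.lift (FreeGroup.lift gq) ι) w :
      Matrix.SpecialLinearGroup (Fin n) K[X]) :
      Matrix (Fin n) (Fin n) K[X]).charpoly.coeff (n - i) with hP
  have hnr : ∀ t : K, P.eval t ≠ a := by
    intro t ht
    exact ha (fun j => Matrix.SpecialLinearGroup.map (evalRingHom t) (gq j))
      (by rw [coeff_eq gq t, ← hP]; exact ht)
  have hdeg : (P - Polynomial.C a).degree ≤ 0 := by
    by_contra hgt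
    have hne : (P - Polynomial.C a).degree ≠ 0 := fun h0 => hgt (le_of_eq h0)
    obtain ⟨t, ht⟩ := IsAlgClosed.exists_root _ hne
    rw [Polynomial.IsRoot, Polynomial.eval_sub, Polynomial.eval_C, sub_eq_zero] at ht
    exact hnr t ht
  have hPC : P = Polynomial.C ((P - Polynomial.C a).coeff 0 + a) := by
    have h1 := Polynomial.eq_C_of_degree_le_zero hdeg
    have h2 : P = (P - Polynomial.C a) + Polynomial.C a := by ring
    rw [Polynomial.C_add, ← h1, ← h2]
  rw [← e0, ← e1, coeff_eq gq 0, coeff_eq gq 1, ← hP, hPC]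
  simp
end

section
/- Let K be an algebraically closed field and let n ≥ 1, m ≥ 1. Let F be a polynomial function on the space M_n(K)^m of m-tuples of n×n matrices (i.e. F is given by a polynomial in the entries of the m matrices) which is homogeneous on each component: there exist natural numbers d_1,…,d_m such that F(g_1,…,g_{i−1}, c·g_i, g_{i+1},…,g_m) = c^{d_i}·F(g_1,…,g_m) for every tuple (g_1,…,g_m) ∈ M_n(K)^m, every c ∈ K, and every i. Then the restriction of F to SL_n(K)^m (tuples of matrices of determinant 1) is either a constant function or takes every value of K. -/
open Matrix Polynomial

namespace SLnAux

variable {K : Type*} [Field K] {n : ℕ}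

lemma std_neg (i j : Fin n) (c : K) :
    Matrix.single i j (-c) = -(Matrix.single i j c) := by
  ext a b
  simp [Matrix.single, apply_ite Neg.neg]
  split <;> simp

lemma std_sub (i j : Fin n) (c e : K) :
    Matrix.single i j (c - e) = Matrix.single i j c - Matrix.single i j e := by
  rw [sub_eq_add_neg, Matrix.single_add, std_neg, sub_eq_add_neg]

/-- `M` can be reached from `1` by a polynomial curve inside `SL_n`. -/
def Conn (M : Matrix (Fin n) (Fin n) K) : Prop :=
  ∃ C : Matrix (Fin n) (Fin n) (Polynomial K),
    C.det = 1 ∧ C.map (eval 0) = 1 ∧ C.map (eval 1) = M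

lemma conn_one : Conn (1 : Matrix (Fin n) (Fin n) K) := by
  refine ⟨1, det_one, ?_, ?_⟩ <;>
  · rw [← coe_evalRingHom]
    exact Matrix.map_one _ (map_zero _) (map_one _)

lemma conn_mul {M N : Matrix (Fin n) (Fin n) K} (hM : Conn M) (hN : Conn N) :
    Conn (M * N) := by
  obtain ⟨C, hC1, hC2, hC3⟩ := hM
  obtain ⟨D, hD1, hD2, hD3⟩ := hN
  refine ⟨C * D, by rw [det_mul, hC1, hD1, one_mul], ?_, ?_⟩
  · rw [← coe_evalRingHom] at *
    rw [Matrix.map_mul, hC2, hD2, one_mul]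
  · rw [← coe_evalRingHom] at *
    rw [Matrix.map_mul, hC3, hD3]

lemma map_transvection {R S : Type*} [CommRing R] [CommRing S] (f : R →+* S)
    (i j : Fin n) (c : R) :
    (transvection i j c).map ⇑f = transvection i j (f c) := by
  ext a b
  simp [transvection, Matrix.map_apply, Matrix.one_apply, Matrix.single, Matrix.add_apply,
    apply_ite f]

lemma conn_transvection {i j : Fin n} (hij : i ≠ j) (c : K) :
    Conn (transvection i j c) := by
  refine ⟨transvection i j (Polynomial.C c * X), det_transvection_of_ne _ _ hij _, ?_, ?_⟩
  · rw [← coe_evalRingHom, map_transvection (evalRingHom (0 : K))]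
    simp [transvection_zero]
  · rw [← coe_evalRingHom, map_transvection (evalRingHom (1 : K))]
    simp

lemma conn_list_prod (L : List (TransvectionStruct (Fin n) K)) :
    Conn (L.map TransvectionStruct.toMatrix).prod := by
  induction L with
  | nil => simpa using conn_one
  | cons t L ih =>
      simp only [List.map_cons, List.prod_cons]
      refine conn_mul ?_ ih
      obtain ⟨i, j, hij, c⟩ := t
      rw [TransvectionStruct.toMatrix_mk]
      exact conn_transvection hij c

lemma wmat_eq {i j : Fin n} (hij : i ≠ j) {a : K} (ha : a ≠ 0) :
    transvection i j a * transvection j i (-a⁻¹) * transvection i j a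
      = 1 - Matrix.single i i 1 - Matrix.single j j 1
        + Matrix.single i j a - Matrix.single j i a⁻¹ := by
  have huu : Matrix.single i j a * Matrix.single i j a = 0 :=
    Matrix.single_mul_single_of_ne (h := hij.symm) ..
  simp only [transvection]
  simp only [add_mul, mul_add, one_mul, mul_one, huu,
    Matrix.single_mul_single_same, Matrix.single_mul_single_of_ne (h := hij),
    Matrix.single_mul_single_of_ne (h := hij.symm),
    mul_neg, neg_mul, mul_inv_cancel₀ ha, inv_mul_cancel₀ ha,
    zero_mul, mul_zero, add_zero, zero_add, std_neg, neg_neg]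
  abel

lemma w_mul_w {i j : Fin n} (hij : i ≠ j) {a : K} (ha : a ≠ 0) :
    (1 - Matrix.single i i 1 - Matrix.single j j 1
        + Matrix.single i j a - Matrix.single j i a⁻¹)
      * (1 - Matrix.single i i 1 - Matrix.single j j 1
        - Matrix.single i j 1 + Matrix.single j i 1)
      = 1 + Matrix.single i i (a - 1) + Matrix.single j j (a⁻¹ - 1) := by
  have hji0 : ∀ (p q : Fin n) (c e : K),
      Matrix.single p j c * Matrix.single i q e = 0 := fun p q c e =>
    Matrix.single_mul_single_of_ne (h := hij.symm) ..
  have hij0 : ∀ (p q : Fin n) (c e : K),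
      Matrix.single p i c * Matrix.single j q e = 0 := fun p q c e =>
    Matrix.single_mul_single_of_ne (h := hij) ..
  simp only [std_sub]
  simp only [sub_mul, mul_sub, add_mul, mul_add, one_mul, mul_one,
    Matrix.single_mul_single_same, hji0, hij0,
    mul_inv_cancel₀ ha, inv_mul_cancel₀ ha,
    zero_mul, mul_zero, add_zero, zero_add, sub_zero, zero_sub, neg_neg]
  abel

lemma diag_twoPoint {i j : Fin n} (hij : i ≠ j) (a : K) :
    diagonal (fun k => if k = i then a else if k = j then a⁻¹ else 1)
      = 1 + Matrix.single i i (a - 1) + Matrix.single j j (a⁻¹ - 1) := by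
  ext p q
  rcases eq_or_ne p q with rfl | hpq
  · rcases eq_or_ne p i with rfl | hpi
    · have hj : ¬(j = p ∧ j = p) := fun h => hij (h.1.symm)
      have hj' : ¬ p = j := fun h => hij h
      simp only [Matrix.add_apply, Matrix.one_apply, Matrix.single, diagonal, of_apply,
        if_pos rfl, if_pos (⟨rfl, rfl⟩ : p = p ∧ p = p), if_neg hj, if_true]
      simp only [and_self, if_true]
      ring
    · rcases eq_or_ne p j with rfl | hpj
      · have hi : ¬(i = p ∧ i = p) := fun h => hpi (h.1.symm)
        simp only [Matrix.add_apply, Matrix.one_apply, Matrix.single, diagonal, of_apply,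
          if_pos rfl, if_pos (⟨rfl, rfl⟩ : p = p ∧ p = p), if_neg hi, if_neg hpi, if_true]
        simp only [and_self, if_true]
        ring
      · have hi : ¬(i = p ∧ i = p) := fun h => hpi (h.1.symm)
        have hj : ¬(j = p ∧ j = p) := fun h => hpj (h.1.symm)
        simp only [Matrix.add_apply, Matrix.one_apply, Matrix.single, diagonal, of_apply,
          if_pos rfl, if_neg hi, if_neg hj, if_neg hpi, if_neg hpj, if_true]
        norm_num
  · have hi : ¬(i = p ∧ i = q) := fun h => hpq (h.1.symm.trans h.2)
    have hj : ¬(j = p ∧ j = q) := fun h => hpq (h.1.symm.trans h.2)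
    simp only [Matrix.add_apply, Matrix.one_apply, Matrix.single, diagonal, of_apply,
      if_neg hi, if_neg hj, if_neg hpq]
    norm_num

lemma conn_twoPoint {i j : Fin n} (hij : i ≠ j) {a : K} (ha : a ≠ 0) :
    Conn (diagonal (fun k => if k = i then a else if k = j then a⁻¹ else 1) :
      Matrix (Fin n) (Fin n) K) := by
  have hm1 : (-1 : K) ≠ 0 := by norm_num
  have h2 := wmat_eq hij hm1
  have h2' : transvection i j (-1 : K) * transvection j i 1 * transvection i j (-1)
      = 1 - Matrix.single i i 1 - Matrix.single j j 1
        - Matrix.single i j 1 + Matrix.single j i 1 := by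
    rw [show -(-1:K)⁻¹ = 1 by norm_num] at h2
    refine h2.trans ?_
    rw [show ((-1:K))⁻¹ = -1 by norm_num, std_neg, std_neg]
    abel
  rw [diag_twoPoint hij a, ← w_mul_w hij ha, ← wmat_eq hij ha, ← h2']
  exact conn_mul
    (conn_mul (conn_mul (conn_transvection hij _) (conn_transvection hij.symm _))
      (conn_transvection hij _))
    (conn_mul (conn_mul (conn_transvection hij _) (conn_transvection hij.symm _))
      (conn_transvection hij _))

lemma conn_diagonal {d : Fin n → K} (hd : ∏ i, d i = 1) : Conn (diagonal d) := by
  classical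
  suffices H : ∀ (k : ℕ) (s : Finset (Fin n)) (e : Fin n → K), s.card = k →
      (∀ i ∉ s, e i = 1) → ∏ i, e i = 1 → Conn (diagonal e) from
    H Finset.univ.card Finset.univ d rfl (by simp) hd
  intro k
  induction k using Nat.strong_induction_on with
  | _ k ih =>
    intro s e hcard hs he
    by_cases htriv : ∀ i, e i = 1
    · have : e = fun _ => 1 := funext htriv
      rw [this]
      simpa [diagonal_one] using (conn_one (K := K) (n := n))
    · push_neg at htriv
      obtain ⟨i, hi⟩ := htriv
      have his : i ∈ s := by
        by_contra h
        exact hi (hs i h)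
      obtain ⟨j, hjs, hji⟩ : ∃ j ∈ s, j ≠ i := by
        by_contra hcon
        push_neg at hcon
        refine hi ?_
        calc e i = ∏ x, e x := by
              refine (Finset.prod_eq_single_of_mem i (Finset.mem_univ i)
                (fun b _ hb => hs b (fun hbs => hb (hcon b hbs)))).symm
          _ = 1 := he
      have hei0 : e i ≠ 0 := by
        intro h0
        have := Finset.prod_eq_zero (Finset.mem_univ i) h0
        rw [he] at this
        exact one_ne_zero this
      set e' : Fin n → K := Function.update (Function.update e i 1) j (e i * e j)
        with he'def
      have he'i : e' i = 1 := by
        rw [he'def, Function.update_of_ne hji.symm, Function.update_self]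
      have he'j : e' j = e i * e j := by
        rw [he'def, Function.update_self]
      have he'x : ∀ x, x ≠ i → x ≠ j → e' x = e x := fun x hxi hxj => by
        rw [he'def, Function.update_of_ne hxj, Function.update_of_ne hxi]
      have key : diagonal e = diagonal e'
          * diagonal (fun k => if k = i then e i else if k = j then (e i)⁻¹ else 1) := by
        rw [diagonal_mul_diagonal]
        refine congrArg diagonal (funext fun x => ?_)
        by_cases hx : x = i
        · rw [hx, he'i, one_mul, if_pos rfl]
        · by_cases hx2 : x = j
          · rw [hx2, he'j, if_neg (fun h => hx (hx2.trans h)), if_pos rfl,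
              mul_comm (e i) (e j), mul_assoc, mul_inv_cancel₀ hei0, mul_one]
          · rw [he'x x hx hx2, if_neg hx, if_neg hx2, mul_one]
      rw [key]
      refine conn_mul ?_ (conn_twoPoint hji.symm hei0)
      refine ih (s.erase i).card ?_ (s.erase i) e' rfl ?_ ?_
      · rw [← hcard]
        exact Finset.card_erase_lt_of_mem his
      · intro x hx
        rcases eq_or_ne x i with rfl | hxi
        · exact he'i
        · have hxs : x ∉ s := fun hxs => hx (Finset.mem_erase.mpr ⟨hxi, hxs⟩)
          have hxj : x ≠ j := by
            rintro rfl
            exact hxs hjs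
          rw [he'x x hxi hxj]
          exact hs x hxs
      · have hju : j ∈ Finset.univ.erase i := Finset.mem_erase.mpr ⟨hji, Finset.mem_univ j⟩
        have hrw : ∀ f : Fin n → K, ∏ x, f x
            = f i * (f j * ∏ x ∈ (Finset.univ.erase i).erase j, f x) := by
          intro f
          rw [← Finset.mul_prod_erase _ _ (Finset.mem_univ i), ← Finset.mul_prod_erase _ _ hju]
        have hsame : ∏ x ∈ (Finset.univ.erase i).erase j, e' x
            = ∏ x ∈ (Finset.univ.erase i).erase j, e x := by
          refine Finset.prod_congr rfl (fun x hx => ?_)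
          have hxj : x ≠ j := (Finset.mem_erase.mp hx).1
          have hxi : x ≠ i := (Finset.mem_erase.mp (Finset.mem_erase.mp hx).2).1
          exact he'x x hxi hxj
        rw [hrw e', hsame, he'i, he'j, one_mul]
        rw [hrw e] at he
        rw [← he]
        ring

lemma conn_of_det_one (M : Matrix (Fin n) (Fin n) K) (hM : M.det = 1) : Conn M := by
  obtain ⟨L, L', D, hD⟩ := Matrix.Pivot.exists_list_transvec_mul_diagonal_mul_list_transvec M
  have hdet : ∏ i, D i = 1 := by
    have h := congrArg Matrix.det hD
    rwa [det_mul, det_mul, TransvectionStruct.det_toMatrix_prod,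
      TransvectionStruct.det_toMatrix_prod, det_diagonal, one_mul, mul_one, hM, eq_comm] at h
  rw [hD]
  exact conn_mul (conn_mul (conn_list_prod L) (conn_diagonal hdet)) (conn_list_prod L')

lemma conn_pair {M M' : Matrix (Fin n) (Fin n) K} (h : Conn M) (h' : Conn M') :
    ∃ C : Matrix (Fin n) (Fin n) (Polynomial K),
      C.det = 1 ∧ C.map (eval 0) = M ∧ C.map (eval 1) = M' := by
  obtain ⟨C, hC1, hC2, hC3⟩ := h
  obtain ⟨D, hD1, hD2, hD3⟩ := h'
  have hcomp : ∀ s t : K, eval s (1 - X : Polynomial K) = t →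
      (⇑(evalRingHom s) ∘ ⇑(Polynomial.aeval (R := K) (1 - X : Polynomial K)))
        = ⇑(evalRingHom t) := by
    intro s t hst
    funext p
    simp only [Function.comp_apply, coe_evalRingHom, ← comp_eq_aeval, eval_comp, hst]
  refine ⟨(C.map ⇑(Polynomial.aeval (R := K) (1 - X : Polynomial K))) * D, ?_, ?_, ?_⟩
  · rw [det_mul, hD1, mul_one]
    have hh := AlgHom.map_det (Polynomial.aeval (R := K) (1 - X : Polynomial K)) C
    rw [hC1] at hh
    simp only [_root_.map_one] at hh
    exact hh.symm
  · rw [← coe_evalRingHom] at hC3 hD2 ⊢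
    rw [Matrix.map_mul, hD2, mul_one, Matrix.map_map, hcomp 0 1 (by simp), hC3]
  · rw [← coe_evalRingHom] at hC2 hD3 ⊢
    rw [Matrix.map_mul, hD3, Matrix.map_map, hcomp 1 0 (by simp), hC2, one_mul]

end SLnAux

/-- A polynomial function on `M_n(K)^m` which is homogeneous in each matrix component
is, when restricted to tuples of determinant-one matrices, either constant or takes
every value of the algebraically closed field `K`. -/
theorem homogeneous_polynomial_on_SLn_constant_or_surjective
    (K : Type*) [Field K] [IsAlgClosed K] (n m : ℕ) (hn : 1 ≤ n) (hm : 1 ≤ m)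
    (P : MvPolynomial (Fin m × Fin n × Fin n) K)
    (F : (Fin m → Matrix (Fin n) (Fin n) K) → K)
    (hF : ∀ g, F g = MvPolynomial.eval (fun p => g p.1 p.2.1 p.2.2) P)
    (d : Fin m → ℕ)
    (hhom : ∀ (g : Fin m → Matrix (Fin n) (Fin n) K) (c : K) (i : Fin m),
      F (Function.update g i (c • g i)) = c ^ d i * F g) :
    (∀ g g' : Fin m → Matrix (Fin n) (Fin n) K,
        (∀ i, (g i).det = 1) → (∀ i, (g' i).det = 1) → F g = F g')
    ∨ (∀ a : K, ∃ g : Fin m → Matrix (Fin n) (Fin n) K,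
        (∀ i, (g i).det = 1) ∧ F g = a) := by
  classical
  by_cases hconst : ∀ g g' : Fin m → Matrix (Fin n) (Fin n) K,
      (∀ i, (g i).det = 1) → (∀ i, (g' i).det = 1) → F g = F g'
  · exact Or.inl hconst
  right
  push_neg at hconst
  obtain ⟨g, g', hg, hg', hne⟩ := hconst
  have hpair : ∀ i : Fin m, ∃ C : Matrix (Fin n) (Fin n) (Polynomial K),
      C.det = 1 ∧ C.map (Polynomial.eval 0) = g i ∧ C.map (Polynomial.eval 1) = g' i :=
    fun i => SLnAux.conn_pair (SLnAux.conn_of_det_one _ (hg i))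
      (SLnAux.conn_of_det_one _ (hg' i))
  choose C hC0 hCa hCb using hpair
  set q : Polynomial K :=
    MvPolynomial.eval₂ (Polynomial.C : K →+* Polynomial K) (fun v => C v.1 v.2.1 v.2.2) P
    with hqdef
  have hqs : ∀ s : K, q.eval s = F (fun i => (C i).map (Polynomial.eval s)) := by
    intro s
    rw [hF]
    have h := MvPolynomial.eval₂_comp_left (Polynomial.evalRingHom s)
      (Polynomial.C : K →+* Polynomial K) (fun v => C v.1 v.2.1 v.2.2) P
    have hcomp : (Polynomial.evalRingHom s).comp (Polynomial.C : K →+* Polynomial K)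
        = RingHom.id K := by
      ext x
      simp
    rw [hcomp, MvPolynomial.eval₂_id] at h
    exact h
  have hdets : ∀ (s : K) (i : Fin m), ((C i).map (Polynomial.eval s)).det = 1 := by
    intro s i
    rw [← Polynomial.coe_evalRingHom]
    have hh := RingHom.map_det (Polynomial.evalRingHom s) (C i)
    rw [hC0 i] at hh
    simp only [_root_.map_one] at hh
    exact hh.symm
  have h0 : (fun i => (C i).map (Polynomial.eval 0)) = g := funext hCa
  have h1 : (fun i => (C i).map (Polynomial.eval 1)) = g' := funext hCb
  intro a
  have hne' : q.eval 0 ≠ q.eval 1 := by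
    rw [hqs 0, hqs 1, h0, h1]
    exact hne
  have hdeg : (q - Polynomial.C a).degree ≠ 0 := by
    intro hdg
    have hc := Polynomial.eq_C_of_degree_le_zero (le_of_eq hdg)
    apply hne'
    have hq : q = Polynomial.C ((q - Polynomial.C a).coeff 0) + Polynomial.C a := by
      rw [← hc]
      ring
    rw [hq]
    simp
  obtain ⟨s, hs⟩ := IsAlgClosed.exists_root _ hdeg
  refine ⟨fun i => (C i).map (Polynomial.eval s), fun i => hdets s i, ?_⟩
  have hz : q.eval s - a = 0 := by
    simpa using hs
  rw [← hqs s]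
  exact sub_eq_zero.mp hz
end

section
/- Let K be an algebraically closed field and m ≥ 1. Let w be a word with constants in SL_2(K), i.e. an element of the free product (FreeGroup over Fin m) ∗ SL_2(K), with evaluation map w̃ : SL_2(K)^m → SL_2(K) sending (g_1,…,g_m) to the image of w under the homomorphism mapping the i-th free generator to g_i and fixing the constants. If the function (g_1,…,g_m) ↦ trace(w̃(g_1,…,g_m)) is not a constant function on SL_2(K)^m, then for every diagonalizable matrix g ∈ SL_2(K) with g ≠ I and g ≠ −I there exist (g_1,…,g_m) ∈ SL_2(K)^m and h ∈ SL_2(K) such that h · w̃(g_1,…,g_m) · h⁻¹ = g (i.e. every non-central semisimple conjugacy class of SL_2(K) intersects the image of w̃). -/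
open Matrix Polynomial

namespace WordSL2

abbrev SL (R : Type*) [CommRing R] := Matrix.SpecialLinearGroup (Fin 2) R

variable {R : Type*} [CommRing R] {S : Type*} [CommRing S]

def e12 (r : R) : SL R := ⟨!![1, r; 0, 1], by simp [Matrix.det_fin_two_of]⟩
def e21 (r : R) : SL R := ⟨!![1, 0; r, 1], by simp [Matrix.det_fin_two_of]⟩

@[simp] lemma e12_zero : e12 (0 : R) = 1 := by
  ext i j; fin_cases i <;> fin_cases j <;> simp [e12]

@[simp] lemma e21_zero : e21 (0 : R) = 1 := by
  ext i j; fin_cases i <;> fin_cases j <;> simp [e21]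

lemma map_e12 (f : R →+* S) (r : R) :
    Matrix.SpecialLinearGroup.map f (e12 r) = e12 (f r) := by
  ext i j; rw [Matrix.SpecialLinearGroup.map_apply_coe]; fin_cases i <;> fin_cases j <;> simp [e12]

lemma map_e21 (f : R →+* S) (r : R) :
    Matrix.SpecialLinearGroup.map f (e21 r) = e21 (f r) := by
  ext i j; rw [Matrix.SpecialLinearGroup.map_apply_coe]; fin_cases i <;> fin_cases j <;> simp [e21]

lemma coe_map (f : R →+* S) (A : SL R) :
    ((Matrix.SpecialLinearGroup.map f A : SL S) : Matrix (Fin 2) (Fin 2) S)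
      = ((A : Matrix (Fin 2) (Fin 2) R)).map f := rfl

lemma trace_map' (f : R →+* S) (A : Matrix (Fin 2) (Fin 2) R) :
    (A.map f).trace = f A.trace := by
  simp [Matrix.trace, Matrix.diag, Matrix.map_apply]

/-- compatibility of the word evaluation over `K[X]` with evaluation of polynomials -/
lemma eval_compat {K : Type*} [Field K] (m : ℕ) (γ : Fin m → SL (Polynomial K)) (s : K)
    (w : Monoid.Coprod (FreeGroup (Fin m)) (SL K)) :
    Matrix.SpecialLinearGroup.map (evalRingHom s)
      ((Monoid.Coprod.lift (FreeGroup.lift γ)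
          (Matrix.SpecialLinearGroup.map (C : K →+* Polynomial K))) w)
      = (Monoid.Coprod.lift
          (FreeGroup.lift (fun i => Matrix.SpecialLinearGroup.map (evalRingHom s) (γ i)))
          (MonoidHom.id (SL K))) w := by
  have h : (Matrix.SpecialLinearGroup.map (n := Fin 2) (evalRingHom s)).comp
      (Monoid.Coprod.lift (FreeGroup.lift γ)
        (Matrix.SpecialLinearGroup.map (C : K →+* Polynomial K)))
      = Monoid.Coprod.lift
          (FreeGroup.lift (fun i => Matrix.SpecialLinearGroup.map (evalRingHom s) (γ i)))
          (MonoidHom.id (SL K)) := by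
    apply Monoid.Coprod.hom_ext
    · rw [MonoidHom.comp_assoc, Monoid.Coprod.lift_comp_inl, Monoid.Coprod.lift_comp_inl]
      apply FreeGroup.ext_hom
      intro a
      simp
    · rw [MonoidHom.comp_assoc, Monoid.Coprod.lift_comp_inr, Monoid.Coprod.lift_comp_inr]
      refine MonoidHom.ext fun A => Subtype.ext ?_
      show ((A : Matrix (Fin 2) (Fin 2) K).map C).map (evalRingHom s) = _
      rw [Matrix.map_map]
      ext i j
      simp
  exact DFunLike.congr_fun h w

lemma tri {K : Type*} [Field K] (a b c d : K) (h : a * d - b * c = 1) (hc : c ≠ 0) :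
    (!![a, b; c, d] : Matrix (Fin 2) (Fin 2) K)
      = (e12 ((a - 1) / c)).1 * (e21 c).1 * (e12 ((d - 1) / c)).1 := by
  ext i j
  fin_cases i <;> fin_cases j <;>
    simp [e12, e21, Matrix.mul_apply, Fin.sum_univ_two] <;> field_simp
  · ring
  · linear_combination -h
  · ring

/-- Every element of `SL₂` over a field is a product of four elementary matrices. -/
lemma exists_elem_decomp {K : Type*} [Field K] (g : SL K) :
    ∃ a b c d : K, g = e12 a * e21 b * e12 c * e21 d := by
  have hdet : (g : Matrix (Fin 2) (Fin 2) K).det = 1 := g.2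
  rw [Matrix.det_fin_two] at hdet
  by_cases hc : (g : Matrix (Fin 2) (Fin 2) K) 1 0 ≠ 0
  · refine ⟨(g.1 0 0 - 1) / g.1 1 0, g.1 1 0, (g.1 1 1 - 1) / g.1 1 0, 0, ?_⟩
    have := tri (g.1 0 0) (g.1 0 1) (g.1 1 0) (g.1 1 1) (by linear_combination hdet) hc
    rw [← Matrix.eta_fin_two g.1] at this
    refine Subtype.ext ?_
    simpa using this
  · push_neg at hc
    -- g * e21 1 has nonzero lower-left entry
    set A := g.1 * (e21 (1 : K)).1 with hA
    have hAdet : A.det = 1 := by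
      rw [hA, Matrix.det_mul, g.2, (e21 (1:K)).2, one_mul]
    have hA10 : A 1 0 ≠ 0 := by
      have : A 1 0 = g.1 1 0 + g.1 1 1 := by
        simp [hA, e21, Matrix.mul_apply, Fin.sum_univ_two]
      rw [this, hc, zero_add]
      intro h0
      rw [hc, h0] at hdet
      simp at hdet
    have hAd : A 0 0 * A 1 1 - A 0 1 * A 1 0 = 1 := by
      rw [← Matrix.det_fin_two]; exact hAdet
    have := tri (A 0 0) (A 0 1) (A 1 0) (A 1 1) (by linear_combination hAd) hA10
    rw [← Matrix.eta_fin_two A] at this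
    refine ⟨(A 0 0 - 1) / A 1 0, A 1 0, (A 1 1 - 1) / A 1 0, -1, ?_⟩
    have hg : g = e12 ((A 0 0 - 1) / A 1 0) * e21 (A 1 0) * e12 ((A 1 1 - 1) / A 1 0) * e21 (-1) := by
      have he : (e21 (1:K)) * (e21 (-1:K)) = 1 := by
        ext i j; rw [Matrix.SpecialLinearGroup.coe_mul]; fin_cases i <;> fin_cases j <;> simp [e21]
      have : g * e21 (1:K) = e12 ((A 0 0 - 1) / A 1 0) * e21 (A 1 0) * e12 ((A 1 1 - 1) / A 1 0) :=
        Subtype.ext (by simpa [hA] using this)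
      calc g = g * e21 (1:K) * e21 (-1:K) := by rw [mul_assoc, he, mul_one]
        _ = _ := by rw [this]
    exact hg

variable {K : Type*} [Field K]

/-- The standard diagonal element of `SL₂`. -/
def Dm (lm mu : K) (h : lm * mu = 1) : SL K :=
  ⟨!![lm, 0; 0, mu], by simp [Matrix.det_fin_two_of, h]⟩

def Jm : SL K := ⟨!![0, -1; 1, 0], by simp [Matrix.det_fin_two_of]⟩

lemma coe_inv' (A : SL K) : ((A⁻¹ : SL K) : Matrix (Fin 2) (Fin 2) K)
    = ((A : Matrix (Fin 2) (Fin 2) K)).adjugate :=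
  Matrix.SpecialLinearGroup.coe_inv A

lemma trace_conj (u M : SL K) :
    (((u * M * u⁻¹ : SL K)) : Matrix (Fin 2) (Fin 2) K).trace
      = ((M : Matrix (Fin 2) (Fin 2) K)).trace := by
  have h2 : ((u⁻¹ : SL K) : Matrix (Fin 2) (Fin 2) K)
      * ((u : SL K) : Matrix (Fin 2) (Fin 2) K) = 1 := by
    rw [← Matrix.SpecialLinearGroup.coe_mul, inv_mul_cancel,
      Matrix.SpecialLinearGroup.coe_one]
  calc (((u * M * u⁻¹ : SL K)) : Matrix (Fin 2) (Fin 2) K).trace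
      = (((u : SL K) : Matrix (Fin 2) (Fin 2) K) * ((M : SL K) : Matrix (Fin 2) (Fin 2) K)
          * ((u⁻¹ : SL K) : Matrix (Fin 2) (Fin 2) K)).trace := by
        simp only [Matrix.SpecialLinearGroup.coe_mul]
    _ = (((u⁻¹ : SL K) : Matrix (Fin 2) (Fin 2) K) * ((u : SL K) : Matrix (Fin 2) (Fin 2) K)
          * ((M : SL K) : Matrix (Fin 2) (Fin 2) K)).trace := Matrix.trace_mul_cycle _ _ _
    _ = _ := by rw [h2, one_mul]

lemma key_mul (a b c d lm mu : K) (hdet : a * d - b * c = 1) (hμ : lm * mu = 1)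
    (htr : a + d = lm + mu) :
    (!![a, b; c, d] : Matrix (Fin 2) (Fin 2) K) * !![b, b; lm - a, mu - a]
      = !![b, b; lm - a, mu - a] * !![lm, 0; 0, mu] := by
  have hq1 : lm * lm = (a + d) * lm - 1 := by linear_combination (-lm) * htr - hμ
  have hq2 : mu * mu = (a + d) * mu - 1 := by linear_combination (-mu) * htr - hμ
  ext i j
  fin_cases i <;> fin_cases j <;>
    simp [Matrix.mul_apply, Fin.sum_univ_two]
  · ring
  · ring
  · linear_combination (-1 : K) * hdet + (-1 : K) * hq1
  · linear_combination (-1 : K) * hdet + (-1 : K) * hq2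

lemma JMJ (M : SL K) :
    (((Jm * M * Jm⁻¹ : SL K)) : Matrix (Fin 2) (Fin 2) K)
      = !![M.1 1 1, -(M.1 1 0); -(M.1 0 1), M.1 0 0] := by
  rw [Matrix.SpecialLinearGroup.coe_mul, Matrix.SpecialLinearGroup.coe_mul, coe_inv']
  show (!![0,-1;1,0] : Matrix (Fin 2) (Fin 2) K) * _
      * (!![0,-1;1,0] : Matrix (Fin 2) (Fin 2) K).adjugate = _
  rw [Matrix.adjugate_fin_two_of, Matrix.eta_fin_two (M : Matrix (Fin 2) (Fin 2) K)]
  ext i j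
  fin_cases i <;> fin_cases j <;> simp [Matrix.mul_apply, Fin.sum_univ_two]

variable [IsAlgClosed K]

lemma conj_core (M : SL K) (lm mu : K) (hμ : lm * mu = 1) (hne : mu - lm ≠ 0)
    (hb : (M : Matrix (Fin 2) (Fin 2) K) 0 1 ≠ 0)
    (htr : (M : Matrix (Fin 2) (Fin 2) K).trace = lm + mu) :
    ∃ h : SL K, h * M * h⁻¹ = Dm lm mu hμ := by
  have hdet : M.1 0 0 * M.1 1 1 - M.1 0 1 * M.1 1 0 = 1 := by
    rw [← Matrix.det_fin_two]; exact M.2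
  have htr' : M.1 0 0 + M.1 1 1 = lm + mu := by
    rw [← Matrix.trace_fin_two]; exact htr
  obtain ⟨s, hs⟩ := IsAlgClosed.exists_pow_nat_eq (M.1 0 1 * (mu - lm)) (n := 2) (by norm_num)
  have hs0 : s ≠ 0 := by
    intro h0
    rw [h0] at hs
    exact (mul_ne_zero hb hne) (by simpa using hs.symm)
  have hPdet : (s⁻¹ • !![M.1 0 1, M.1 0 1; lm - M.1 0 0, mu - M.1 0 0]
      : Matrix (Fin 2) (Fin 2) K).det = 1 := by
    rw [Matrix.det_smul, Matrix.det_fin_two_of]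
    have h5 : M.1 0 1 * (mu - M.1 0 0) - M.1 0 1 * (lm - M.1 0 0) = s ^ 2 := by
      linear_combination (-1 : K) * hs
    rw [h5, inv_pow]
    exact inv_mul_cancel₀ (pow_ne_zero 2 hs0)
  set P : SL K := ⟨_, hPdet⟩ with hP
  have key := key_mul (M.1 0 0) (M.1 0 1) (M.1 1 0) (M.1 1 1) lm mu hdet hμ htr'
  rw [← Matrix.eta_fin_two (M : Matrix (Fin 2) (Fin 2) K)] at key
  have hMP : M * P = P * Dm lm mu hμ := by
    apply Subtype.ext
    show (M : Matrix (Fin 2) (Fin 2) K) * (s⁻¹ • _) = (s⁻¹ • _) * _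
    rw [Matrix.mul_smul, Matrix.smul_mul, key]
    rfl
  refine ⟨P⁻¹, ?_⟩
  rw [inv_inv, mul_assoc, hMP, ← mul_assoc, inv_mul_cancel, one_mul]

lemma conj_D (M : SL K) (lm mu : K) (hμ : lm * mu = 1) (hne : mu - lm ≠ 0)
    (htr : (M : Matrix (Fin 2) (Fin 2) K).trace = lm + mu) :
    ∃ h : SL K, h * M * h⁻¹ = Dm lm mu hμ := by
  have hdet : M.1 0 0 * M.1 1 1 - M.1 0 1 * M.1 1 0 = 1 := by
    rw [← Matrix.det_fin_two]; exact M.2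
  have htr' : M.1 0 0 + M.1 1 1 = lm + mu := by
    rw [← Matrix.trace_fin_two]; exact htr
  by_cases hb : M.1 0 1 ≠ 0
  · exact conj_core M lm mu hμ hne hb htr
  push_neg at hb
  by_cases hc : M.1 1 0 ≠ 0
  · have hb' : ((Jm * M * Jm⁻¹ : SL K) : Matrix (Fin 2) (Fin 2) K) 0 1 ≠ 0 := by
      rw [JMJ]; simpa using hc
    have htr2 : ((Jm * M * Jm⁻¹ : SL K) : Matrix (Fin 2) (Fin 2) K).trace = lm + mu := by
      rw [trace_conj]; exact htr
    obtain ⟨h, hh⟩ := conj_core (Jm * M * Jm⁻¹) lm mu hμ hne hb' htr2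
    refine ⟨h * Jm, ?_⟩
    rw [_root_.mul_inv_rev]
    calc h * Jm * M * (Jm⁻¹ * h⁻¹) = h * (Jm * M * Jm⁻¹) * h⁻¹ := by
          simp [mul_assoc]
      _ = Dm lm mu hμ := hh
  · push_neg at hc
    have haM : M.1 0 0 * M.1 1 1 = 1 := by linear_combination hdet + M.1 1 0 * hb
    have hfac : (M.1 0 0 - lm) * (M.1 0 0 - mu) = 0 := by
      linear_combination M.1 0 0 * htr' + hμ - haM
    have hlm0 : lm ≠ 0 := by
      intro h0; rw [h0, zero_mul] at hμ; exact zero_ne_one hμ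
    have hmu0 : mu ≠ 0 := by
      intro h0; rw [h0, mul_zero] at hμ; exact zero_ne_one hμ
    rcases mul_eq_zero.mp hfac with h1 | h2
    · have halm : M.1 0 0 = lm := sub_eq_zero.mp h1
      have hdmu : M.1 1 1 = mu := by
        rw [halm] at haM
        exact mul_left_cancel₀ hlm0 (by rw [haM, hμ])
      refine ⟨1, ?_⟩
      rw [one_mul, inv_one, mul_one]
      apply Subtype.ext
      show (M : Matrix (Fin 2) (Fin 2) K) = _
      rw [Matrix.eta_fin_two (M : Matrix (Fin 2) (Fin 2) K), hb, hc, halm, hdmu]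
      rfl
    · have hamu : M.1 0 0 = mu := sub_eq_zero.mp h2
      have hdlm : M.1 1 1 = lm := by
        rw [hamu] at haM
        exact mul_left_cancel₀ hmu0 (by rw [haM, mul_comm mu lm, hμ])
      refine ⟨Jm, ?_⟩
      apply Subtype.ext
      rw [JMJ, hb, hc, hamu, hdlm]
      show _ = (!![lm, 0; 0, mu] : Matrix (Fin 2) (Fin 2) K)
      norm_num

lemma scalar_of_diag_trace (g : Matrix.SpecialLinearGroup (Fin 2) K) (P : GL (Fin 2) K)
    (hD : Matrix.IsDiag ((↑(P⁻¹) : Matrix (Fin 2) (Fin 2) K) * (↑g : Matrix (Fin 2) (Fin 2) K) *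
        (↑P : Matrix (Fin 2) (Fin 2) K)))
    (e : K) (he : e * e = 1) (htr : (↑g : Matrix (Fin 2) (Fin 2) K).trace = e + e) :
    (↑g : Matrix (Fin 2) (Fin 2) K) = e • 1 := by
  set Q : Matrix (Fin 2) (Fin 2) K := ↑(P⁻¹) with hQ
  set Pm : Matrix (Fin 2) (Fin 2) K := ↑P with hPm
  have hQP : Q * Pm = 1 := by
    rw [hQ, hPm, ← Units.val_mul, inv_mul_cancel, Units.val_one]
  have hPQ : Pm * Q = 1 := by
    rw [hQ, hPm, ← Units.val_mul, mul_inv_cancel, Units.val_one]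
  set G : Matrix (Fin 2) (Fin 2) K := ↑g with hG
  set D : Matrix (Fin 2) (Fin 2) K := Q * G * Pm with hDdef
  have htrD : D.trace = e + e := by
    rw [hDdef, Matrix.trace_mul_cycle, hPQ, one_mul, htr]
  have hdetD : D.det = 1 := by
    rw [hDdef, Matrix.det_mul, Matrix.det_mul, mul_comm, ← mul_assoc]
    have : Pm.det * Q.det = 1 := by rw [← Matrix.det_mul, hPQ, Matrix.det_one]
    rw [this, one_mul, hG, g.2]
  have h01 : D 0 1 = 0 := @hD 0 1 (by decide)
  have h10 : D 1 0 = 0 := @hD 1 0 (by decide)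
  have hdet2 : D 0 0 * D 1 1 = 1 := by
    have := Matrix.det_fin_two D
    rw [hdetD, h01] at this
    linear_combination (-1 : K) * this
  have htr2 : D 0 0 + D 1 1 = e + e := by
    have := Matrix.trace_fin_two D
    rw [htrD] at this
    linear_combination (-1 : K) * this
  have h00 : D 0 0 = e := by
    have hz : (D 0 0 - e) * (D 0 0 - e) = 0 := by
      linear_combination (-1 : K) * hdet2 + D 0 0 * htr2 + he
    have := mul_self_eq_zero.mp hz
    linear_combination this
  have h11 : D 1 1 = e := by linear_combination htr2 + (-1 : K) * h00
  have hDval : D = e • (1 : Matrix (Fin 2) (Fin 2) K) := by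
    ext i j
    fin_cases i <;> fin_cases j <;>
      simp [h00, h01, h10, h11, Matrix.one_apply]
  have hfin : Pm * D * Q = G := by
    rw [hDdef]
    calc Pm * (Q * G * Pm) * Q = (Pm * Q) * G * (Pm * Q) := by
          simp only [mul_assoc]
      _ = G := by rw [hPQ, one_mul, mul_one]
  show G = e • 1
  rw [← hfin, hDval]
  rw [Matrix.mul_smul, Matrix.smul_mul, Matrix.mul_one, hPQ]


end WordSL2

open Matrix Polynomial in
/-- If the trace of a word map with constants on `SL₂(K)` (`K` algebraically closed) is not
a constant function, then every non-central semisimple (= diagonalizable, `≠ ±1`) conjugacy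
class of `SL₂(K)` meets the image of the word map. -/
theorem word_with_constants_image_meets_noncentral_semisimple_classes
    (K : Type*) [Field K] [IsAlgClosed K] (m : ℕ) (hm : 1 ≤ m)
    (w : Monoid.Coprod (FreeGroup (Fin m)) (Matrix.SpecialLinearGroup (Fin 2) K))
    (hnc : ¬ ∀ g g' : Fin m → Matrix.SpecialLinearGroup (Fin 2) K,
      Matrix.trace (((Monoid.Coprod.lift (FreeGroup.lift g) (MonoidHom.id _)) w :
          Matrix.SpecialLinearGroup (Fin 2) K) : Matrix (Fin 2) (Fin 2) K)
        = Matrix.trace (((Monoid.Coprod.lift (FreeGroup.lift g') (MonoidHom.id _)) w :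
          Matrix.SpecialLinearGroup (Fin 2) K) : Matrix (Fin 2) (Fin 2) K))
    (g : Matrix.SpecialLinearGroup (Fin 2) K)
    (hdiag : ∃ P : GL (Fin 2) K,
      Matrix.IsDiag ((↑(P⁻¹) : Matrix (Fin 2) (Fin 2) K) * (↑g : Matrix (Fin 2) (Fin 2) K) *
        (↑P : Matrix (Fin 2) (Fin 2) K)))
    (hg1 : (↑g : Matrix (Fin 2) (Fin 2) K) ≠ 1)
    (hg2 : (↑g : Matrix (Fin 2) (Fin 2) K) ≠ -1) :
    ∃ (gs : Fin m → Matrix.SpecialLinearGroup (Fin 2) K)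
      (h : Matrix.SpecialLinearGroup (Fin 2) K),
      h * ((Monoid.Coprod.lift (FreeGroup.lift gs) (MonoidHom.id _)) w) * h⁻¹ = g := by
  classical
  obtain ⟨P, hD⟩ := hdiag
  push_neg at hnc
  obtain ⟨gs0, gs1, hne01⟩ := hnc
  set τ : K := Matrix.trace (↑g : Matrix (Fin 2) (Fin 2) K) with hτ
  choose a0 b0 c0 d0 hdec0 using fun i => WordSL2.exists_elem_decomp (gs0 i)
  choose a1 b1 c1 d1 hdec1 using fun i => WordSL2.exists_elem_decomp (gs1 i)
  set γ : Fin m → WordSL2.SL (Polynomial K) := fun i =>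
    WordSL2.e12 ((1 - X) * C (a0 i)) * WordSL2.e21 ((1 - X) * C (b0 i)) *
      WordSL2.e12 ((1 - X) * C (c0 i)) * WordSL2.e21 ((1 - X) * C (d0 i)) *
      (WordSL2.e12 (X * C (a1 i)) * WordSL2.e21 (X * C (b1 i)) *
        WordSL2.e12 (X * C (c1 i)) * WordSL2.e21 (X * C (d1 i))) with hγ
  have hγ0 : (fun i => Matrix.SpecialLinearGroup.map (evalRingHom (0 : K)) (γ i)) = gs0 := by
    funext i
    rw [hγ]
    simp only [_root_.map_mul, WordSL2.map_e12, WordSL2.map_e21, coe_evalRingHom, eval_mul,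
      eval_sub, eval_one, eval_X, eval_C, sub_zero, one_mul, zero_mul, WordSL2.e12_zero,
      WordSL2.e21_zero, mul_one]
    exact (hdec0 i).symm
  have hγ1 : (fun i => Matrix.SpecialLinearGroup.map (evalRingHom (1 : K)) (γ i)) = gs1 := by
    funext i
    rw [hγ]
    simp only [_root_.map_mul, WordSL2.map_e12, WordSL2.map_e21, coe_evalRingHom, eval_mul,
      eval_sub, eval_one, eval_X, eval_C, sub_self, zero_mul, one_mul, WordSL2.e12_zero,
      WordSL2.e21_zero, mul_one, one_mul]
    exact (hdec1 i).symm
  set p : Polynomial K := Matrix.trace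
    (((Monoid.Coprod.lift (FreeGroup.lift γ)
        (Matrix.SpecialLinearGroup.map (C : K →+* Polynomial K))) w :
      WordSL2.SL (Polynomial K)) : Matrix (Fin 2) (Fin 2) (Polynomial K)) with hp
  have hevals : ∀ s : K, p.eval s = Matrix.trace
      (((Monoid.Coprod.lift
          (FreeGroup.lift (fun i => Matrix.SpecialLinearGroup.map (evalRingHom s) (γ i)))
          (MonoidHom.id _)) w : Matrix.SpecialLinearGroup (Fin 2) K)
        : Matrix (Fin 2) (Fin 2) K) := by
    intro s
    conv_rhs => rw [← WordSL2.eval_compat m γ s w]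
    rw [hp, WordSL2.coe_map, WordSL2.trace_map']
    rfl
  have he0 : p.eval 0 = Matrix.trace (((Monoid.Coprod.lift (FreeGroup.lift gs0)
      (MonoidHom.id _)) w : Matrix.SpecialLinearGroup (Fin 2) K) : Matrix (Fin 2) (Fin 2) K) := by
    rw [hevals 0, hγ0]
  have he1 : p.eval 1 = Matrix.trace (((Monoid.Coprod.lift (FreeGroup.lift gs1)
      (MonoidHom.id _)) w : Matrix.SpecialLinearGroup (Fin 2) K) : Matrix (Fin 2) (Fin 2) K) := by
    rw [hevals 1, hγ1]
  have hnep : p.eval 0 ≠ p.eval 1 := by rw [he0, he1]; exact hne01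
  have hdeg : (p - C τ).degree ≠ 0 := by
    intro hdeg0
    apply hnep
    have h' := Polynomial.eq_C_of_degree_le_zero (le_of_eq hdeg0)
    have hp' : p = C ((p - C τ).coeff 0) + C τ := by
      rw [← h']; ring
    rw [hp']
    simp
  obtain ⟨s, hroot⟩ := IsAlgClosed.exists_root _ hdeg
  have hps : p.eval s = τ := by
    have h' : (p - C τ).eval s = 0 := hroot
    rw [eval_sub, eval_C, sub_eq_zero] at h'
    exact h'
  set gss : Fin m → Matrix.SpecialLinearGroup (Fin 2) K :=
    fun i => Matrix.SpecialLinearGroup.map (evalRingHom s) (γ i) with hgss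
  set x : Matrix.SpecialLinearGroup (Fin 2) K :=
    (Monoid.Coprod.lift (FreeGroup.lift gss) (MonoidHom.id _)) w with hx
  have htrx : Matrix.trace ((x : Matrix (Fin 2) (Fin 2) K)) = τ := by
    rw [← hps, hevals s]
  -- choose an eigenvalue
  have hdeg2 : (X ^ 2 - C τ * X + C 1 : Polynomial K).degree ≠ 0 := by
    have : (X ^ 2 - C τ * X + C 1 : Polynomial K)
        = C 1 * X ^ 2 + C (-τ) * X + C 1 := by rw [Polynomial.C_neg, Polynomial.C_1]; ring
    rw [this, Polynomial.degree_quadratic one_ne_zero]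
    decide
  obtain ⟨lm, hlm⟩ := IsAlgClosed.exists_root _ hdeg2
  have hlmeq : lm ^ 2 - τ * lm + 1 = 0 := by
    have := hlm
    simpa [Polynomial.IsRoot] using this
  have hlm0 : lm ≠ 0 := by
    intro h0
    rw [h0] at hlmeq
    simp at hlmeq
  set mu : K := lm⁻¹ with hmu
  have hμ : lm * mu = 1 := mul_inv_cancel₀ hlm0
  have htau : τ = lm + mu := by
    have h' : lm * (lm + mu) = lm * τ := by
      rw [mul_add, hμ]
      linear_combination hlmeq
    exact (mul_left_cancel₀ hlm0 h').symm
  have hne2 : mu - lm ≠ 0 := by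
    intro h0
    have hmueq : mu = lm := by linear_combination h0
    rw [hmueq] at hμ
    rcases mul_self_eq_one_iff.mp hμ with h1 | h1
    · apply hg1
      have := WordSL2.scalar_of_diag_trace g P hD 1 (by norm_num)
        (by rw [← hτ, htau, hmueq, h1])
      rw [this, one_smul]
    · apply hg2
      have := WordSL2.scalar_of_diag_trace g P hD (-1) (by norm_num)
        (by rw [← hτ, htau, hmueq, h1])
      rw [this]
      simp
  obtain ⟨h1, hh1⟩ := WordSL2.conj_D x lm mu hμ hne2 (by rw [htrx, htau])
  obtain ⟨h2, hh2⟩ := WordSL2.conj_D g lm mu hμ hne2 (by rw [← hτ, htau])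
  refine ⟨gss, h2⁻¹ * h1, ?_⟩
  have hg' : h2⁻¹ * WordSL2.Dm lm mu hμ * h2 = g := by
    rw [← hh2]
    group
  calc (h2⁻¹ * h1) * x * (h2⁻¹ * h1)⁻¹
      = h2⁻¹ * (h1 * x * h1⁻¹) * h2 := by
        rw [_root_.mul_inv_rev]
        simp [mul_assoc]
    _ = h2⁻¹ * WordSL2.Dm lm mu hμ * h2 := by rw [hh1]
    _ = g := hg'
end

section
/- For every complex number a there exist matrices g_1, g_2 ∈ SL_2(ℂ) such that trace(g_1·g_2·g_1⁻¹·g_2⁻¹) = a. -/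
/-- For every complex number `a` there exist `g₁ g₂ ∈ SL₂(ℂ)` such that the trace of their
commutator `g₁ * g₂ * g₁⁻¹ * g₂⁻¹` equals `a`. -/
theorem trace_commutator_surjective_SL2C (a : ℂ) :
    ∃ g₁ g₂ : Matrix.SpecialLinearGroup (Fin 2) ℂ,
      Matrix.trace ((g₁ * g₂ * g₁⁻¹ * g₂⁻¹ :
        Matrix.SpecialLinearGroup (Fin 2) ℂ) : Matrix (Fin 2) (Fin 2) ℂ) = a := by
  obtain ⟨c, hc⟩ := IsAlgClosed.exists_pow_nat_eq (a - 2) (n := 2) (by norm_num)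
  refine ⟨⟨!![1,1;0,1], by simp [Matrix.det_fin_two_of]⟩,
          ⟨!![1,0;c,1], by simp [Matrix.det_fin_two_of]⟩, ?_⟩
  erw [Matrix.SpecialLinearGroup.coe_mul, Matrix.SpecialLinearGroup.coe_mul,
    Matrix.SpecialLinearGroup.coe_mul, Matrix.SpecialLinearGroup.coe_inv,
    Matrix.SpecialLinearGroup.coe_inv]
  simp only [Matrix.SpecialLinearGroup.coe_mul, Matrix.SpecialLinearGroup.coe_inv,
    Matrix.adjugate_fin_two, Matrix.trace_fin_two]
  simp [Matrix.mul_apply, Fin.sum_univ_two]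
  linear_combination hc
end

section
/- Let λ ∈ ℂ with λ ≠ 0 and λ² ≠ 1, set t = [[λ, 0], [0, λ⁻¹]], and let g ∈ SL_2(ℂ). If t·g·t⁻¹·g⁻¹ = −I, then λ = i or λ = −i, and there exists μ ∈ ℂ, μ ≠ 0, such that g = [[0, μ], [−μ⁻¹, 0]]. -/
/-- If `t = [[λ,0],[0,λ⁻¹]]` with `λ ≠ 0`, `λ² ≠ 1`, and `g` has determinant `1`, and the
commutator `t * g * t⁻¹ * g⁻¹` equals `-I`, then `λ = ±i` and `g = [[0,μ],[−μ⁻¹,0]]` for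
some `μ ≠ 0`. -/
theorem commutator_eq_neg_one_SL2C (l : ℂ) (hl : l ≠ 0) (hl2 : l ^ 2 ≠ 1)
    (g : Matrix (Fin 2) (Fin 2) ℂ) (hg : g.det = 1)
    (hcomm : (!![l, 0; 0, l⁻¹] : Matrix (Fin 2) (Fin 2) ℂ) * g *
      (!![l, 0; 0, l⁻¹] : Matrix (Fin 2) (Fin 2) ℂ)⁻¹ * g⁻¹ = -1) :
    (l = Complex.I ∨ l = -Complex.I) ∧ ∃ μ : ℂ, μ ≠ 0 ∧ g = !![0, μ; -μ⁻¹, 0] := by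
  have ht : (!![l, 0; 0, l⁻¹] : Matrix (Fin 2) (Fin 2) ℂ)⁻¹ = !![l⁻¹, 0; 0, l] := by
    apply Matrix.inv_eq_right_inv
    ext i j
    fin_cases i <;> fin_cases j <;>
      simp [Matrix.mul_apply, Fin.sum_univ_succ, hl, mul_inv_cancel₀, inv_mul_cancel₀]
  have hgu : IsUnit g.det := by rw [hg]; exact isUnit_one
  have h2 : (!![l, 0; 0, l⁻¹] : Matrix (Fin 2) (Fin 2) ℂ) * g * !![l⁻¹, 0; 0, l] = -g := by
    have := congrArg (· * g) hcomm
    simpa [ht, mul_assoc, Matrix.nonsing_inv_mul g hgu] using this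
  have key : ∀ i j, (!![l, 0; 0, l⁻¹] * g * !![l⁻¹, 0; 0, l] : Matrix (Fin 2) (Fin 2) ℂ) i j = (-g) i j :=
    fun i j => by rw [h2]
  have e00 := key 0 0
  have e01 := key 0 1
  have e10 := key 1 0
  have e11 := key 1 1
  simp [Matrix.mul_apply, Matrix.vecMul, dotProduct, Fin.sum_univ_succ] at e00 e01 e10 e11
  -- e00 : l * g 0 0 * l⁻¹ = -g 0 0 etc.
  have ha : g 0 0 = 0 := by
    field_simp at e00
    linear_combination (1/2 : ℂ) * e00
  have hd : g 1 1 = 0 := by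
    field_simp at e11
    linear_combination (1/2 : ℂ) * e11
  have hdet : g 0 0 * g 1 1 - g 0 1 * g 1 0 = 1 := by
    rw [← Matrix.det_fin_two]; exact hg
  rw [ha, hd] at hdet
  have hb : g 0 1 ≠ 0 := by
    intro h; rw [h] at hdet; simp at hdet
  have hl2' : l ^ 2 = -1 := by
    -- e01 : l * g 0 1 * l = -g 0 1
    have : (l ^ 2 + 1) * g 0 1 = 0 := by linear_combination e01
    rcases mul_eq_zero.mp this with h | h
    · linear_combination h
    · exact absurd h hb
  constructor
  · have : (l - Complex.I) * (l + Complex.I) = 0 := by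
      have := Complex.I_sq
      linear_combination hl2' - this
    rcases mul_eq_zero.mp this with h | h
    · left; linear_combination h
    · right; linear_combination h
  · refine ⟨g 0 1, hb, ?_⟩
    have hc : g 1 0 = -(g 0 1)⁻¹ := by
      field_simp
      linear_combination -hdet
    ext i j
    fin_cases i <;> fin_cases j <;> simp [ha, hd, hc]
end

section
/- Let x, y ∈ SL_2(ℂ) and let m, n be positive integers. If x^m ≠ I, x^m ≠ −I, y^n ≠ I, y^n ≠ −I, and x^m commutes with y^n (i.e. x^m·y^n = y^n·x^m), then x commutes with y (i.e. x·y = y·x). -/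
open Matrix

private lemma span_of_commute (A B : Matrix (Fin 2) (Fin 2) ℂ)
    (hA : A 0 1 ≠ 0 ∨ A 1 0 ≠ 0 ∨ A 0 0 ≠ A 1 1)
    (h : A * B = B * A) :
    ∃ α β : ℂ, B = α • (1 : Matrix (Fin 2) (Fin 2) ℂ) + β • A := by
  have e00 := congrFun (congrFun h 0) 0
  have e01 := congrFun (congrFun h 0) 1
  have e10 := congrFun (congrFun h 1) 0
  simp [Matrix.mul_apply, Fin.sum_univ_two] at e00 e01 e10
  rcases hA with hb | hc | had
  · refine ⟨B 0 0 - (B 0 1 / A 0 1) * A 0 0, B 0 1 / A 0 1, ?_⟩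
    ext i j
    fin_cases i <;> fin_cases j <;> [skip; skip; skip; skip]
    · simp [Matrix.one_apply]
    · simp [Matrix.one_apply]; field_simp
    · simp [Matrix.one_apply]; field_simp; linear_combination e00
    · simp [Matrix.one_apply]; field_simp; linear_combination e01
  · refine ⟨B 0 0 - (B 1 0 / A 1 0) * A 0 0, B 1 0 / A 1 0, ?_⟩
    ext i j
    fin_cases i <;> fin_cases j <;> [skip; skip; skip; skip]
    · simp [Matrix.one_apply]
    · simp [Matrix.one_apply]; field_simp; linear_combination -e00
    · simp [Matrix.one_apply]; field_simp
    · simp [Matrix.one_apply]; field_simp; linear_combination -e10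
  · have hd : A 0 0 - A 1 1 ≠ 0 := sub_ne_zero.mpr had
    refine ⟨B 0 0 - ((B 0 0 - B 1 1) / (A 0 0 - A 1 1)) * A 0 0,
      (B 0 0 - B 1 1) / (A 0 0 - A 1 1), ?_⟩
    ext i j
    fin_cases i <;> fin_cases j <;> [skip; skip; skip; skip]
    · simp [Matrix.one_apply]
    · simp [Matrix.one_apply]; field_simp; linear_combination e01
    · simp [Matrix.one_apply]; field_simp; linear_combination -e10
    · simp [Matrix.one_apply]; field_simp; ring

private lemma nonscalar_of_SL (A : Matrix.SpecialLinearGroup (Fin 2) ℂ)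
    (h1 : (↑A : Matrix (Fin 2) (Fin 2) ℂ) ≠ 1)
    (h2 : (↑A : Matrix (Fin 2) (Fin 2) ℂ) ≠ -1) :
    (↑A : Matrix (Fin 2) (Fin 2) ℂ) 0 1 ≠ 0 ∨
      (↑A : Matrix (Fin 2) (Fin 2) ℂ) 1 0 ≠ 0 ∨
      (↑A : Matrix (Fin 2) (Fin 2) ℂ) 0 0 ≠ (↑A : Matrix (Fin 2) (Fin 2) ℂ) 1 1 := by
  by_contra hcon
  push_neg at hcon
  obtain ⟨hb, hc, had⟩ := hcon
  have hdet : Matrix.det (↑A : Matrix (Fin 2) (Fin 2) ℂ) = 1 := A.2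
  rw [Matrix.det_fin_two, hb, hc, ← had] at hdet
  simp at hdet
  have hcases : (↑A : Matrix (Fin 2) (Fin 2) ℂ) 0 0 = 1 ∨ (↑A : Matrix (Fin 2) (Fin 2) ℂ) 0 0 = -1 := by
    have : ((↑A : Matrix (Fin 2) (Fin 2) ℂ) 0 0 - 1) * ((↑A : Matrix (Fin 2) (Fin 2) ℂ) 0 0 + 1) = 0 := by
      linear_combination hdet
    rcases mul_eq_zero.mp this with h | h
    · exact Or.inl (by linear_combination h)
    · exact Or.inr (by linear_combination h)
  rcases hcases with ha | ha
  · apply h1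
    ext i j
    fin_cases i <;> fin_cases j <;> simp [Matrix.one_apply, hb, hc, ha, ← had]
  · apply h2
    ext i j
    fin_cases i <;> fin_cases j <;> simp [Matrix.one_apply, hb, hc, ha, ← had]

private lemma comm_of_comm (A B C : Matrix (Fin 2) (Fin 2) ℂ)
    (hA : A 0 1 ≠ 0 ∨ A 1 0 ≠ 0 ∨ A 0 0 ≠ A 1 1)
    (hB : A * B = B * A) (hC : A * C = C * A) : B * C = C * B := by
  obtain ⟨α, β, rfl⟩ := span_of_commute A B hA hB
  obtain ⟨γ, δ, rfl⟩ := span_of_commute A C hA hC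
  simp only [add_mul, mul_add, smul_mul_assoc, mul_smul_comm, smul_smul, one_mul, mul_one]
  module

/-- In `SL₂(ℂ)`: if `x^m` and `y^n` are non-central (different from `±1`) and commute,
then `x` and `y` commute. -/
theorem commute_of_pow_commute_SL2C (x y : Matrix.SpecialLinearGroup (Fin 2) ℂ)
    (m n : ℕ) (hm : 0 < m) (hn : 0 < n)
    (hx1 : (↑(x ^ m) : Matrix (Fin 2) (Fin 2) ℂ) ≠ 1)
    (hx2 : (↑(x ^ m) : Matrix (Fin 2) (Fin 2) ℂ) ≠ -1)
    (hy1 : (↑(y ^ n) : Matrix (Fin 2) (Fin 2) ℂ) ≠ 1)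
    (hy2 : (↑(y ^ n) : Matrix (Fin 2) (Fin 2) ℂ) ≠ -1)
    (hcomm : x ^ m * y ^ n = y ^ n * x ^ m) :
    x * y = y * x := by
  have hXm := nonscalar_of_SL (x ^ m) hx1 hx2
  have hYn := nonscalar_of_SL (y ^ n) hy1 hy2
  have hmc : (↑(x ^ m) : Matrix (Fin 2) (Fin 2) ℂ) * (↑(y ^ n) : Matrix (Fin 2) (Fin 2) ℂ)
      = (↑(y ^ n) : Matrix (Fin 2) (Fin 2) ℂ) * (↑(x ^ m) : Matrix (Fin 2) (Fin 2) ℂ) := by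
    have := congrArg Subtype.val hcomm
    simpa using this
  have hxx : (↑(x ^ m) : Matrix (Fin 2) (Fin 2) ℂ) * (↑x : Matrix (Fin 2) (Fin 2) ℂ)
      = (↑x : Matrix (Fin 2) (Fin 2) ℂ) * (↑(x ^ m) : Matrix (Fin 2) (Fin 2) ℂ) := by
    have h : x ^ m * x = x * x ^ m := by rw [← pow_succ, ← pow_succ']
    have := congrArg Subtype.val h
    simpa using this
  have hyy : (↑(y ^ n) : Matrix (Fin 2) (Fin 2) ℂ) * (↑y : Matrix (Fin 2) (Fin 2) ℂ)
      = (↑y : Matrix (Fin 2) (Fin 2) ℂ) * (↑(y ^ n) : Matrix (Fin 2) (Fin 2) ℂ) := by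
    have h : y ^ n * y = y * y ^ n := by rw [← pow_succ, ← pow_succ']
    have := congrArg Subtype.val h
    simpa using this
  -- x commutes with y^n
  have h1 := comm_of_comm _ _ _ hXm hxx hmc
  -- x commutes with y
  have h2 := comm_of_comm _ _ _ hYn h1.symm hyy
  refine Subtype.ext ?_
  have : (↑(x * y) : Matrix (Fin 2) (Fin 2) ℂ) = ↑(y * x) := by
    simp only [Matrix.SpecialLinearGroup.coe_mul]
    exact h2
  exact this
end

section
/- Let λ ∈ ℂ with λ ≠ 0 and λ⁴ ≠ 1, and set s = [[λ, 0], [0, λ⁻¹]]. Let α ∈ ℂ, α ≠ 0, let b ∈ ℂ, and set h = [[0, α], [−α⁻¹, 0]]·[[1, b], [0, 1]]. Define z = s·h·s⁻¹·h⁻¹ and v = z·(s·z·s⁻¹)·z⁻¹·(s·z⁻¹·s⁻¹). Then v is lower unitriangular, i.e. its diagonal entries equal 1 and its (1,2) entry equals 0; moreover v = I if and only if b = 0. -/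
set_option maxHeartbeats 1000000


/-- For `s = [[λ,0],[0,λ⁻¹]]` with `λ⁴ ≠ 1` and `h = [[0,α],[-α⁻¹,0]]·[[1,b],[0,1]]`
(`α ≠ 0`), setting `z = ⁅s,h⁆` and `v = ⁅z, s z s⁻¹⁆`, the matrix `v` is lower
unitriangular, and `v = 1` if and only if `b = 0`. -/
theorem word_value_lower_unitriangular (l : ℂ) (hl : l ≠ 0) (hl4 : l ^ 4 ≠ 1)
    (α : ℂ) (hα : α ≠ 0) (b : ℂ) :
    ∀ s h z v : Matrix (Fin 2) (Fin 2) ℂ,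
      s = !![l, 0; 0, l⁻¹] →
      h = !![0, α; -α⁻¹, 0] * !![1, b; 0, 1] →
      z = s * h * s⁻¹ * h⁻¹ →
      v = z * (s * z * s⁻¹) * z⁻¹ * (s * z⁻¹ * s⁻¹) →
      (v 0 0 = 1 ∧ v 1 1 = 1 ∧ v 0 1 = 0) ∧ (v = 1 ↔ b = 0) := by
  intro s h z v hs hh hz hv
  have hl2 : l ^ 2 ≠ 1 := fun e => hl4 (by rw [show (4:ℕ) = 2*2 by norm_num, pow_mul, e, one_pow])
  -- explicit inverses
  have hsinv : s⁻¹ = !![l⁻¹, 0; 0, l] := by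
    apply Matrix.inv_eq_right_inv
    rw [hs]
    ext i j
    fin_cases i <;> fin_cases j <;>
      simp [Matrix.mul_apply, Fin.sum_univ_succ, Matrix.one_apply] <;>
      field_simp
  have hhinv : h⁻¹ = !![-(α⁻¹*b), -α; α⁻¹, 0] := by
    apply Matrix.inv_eq_right_inv
    rw [hh]
    simp only [Matrix.mul_fin_two]
    ext i j
    fin_cases i <;> fin_cases j <;>
      simp [Matrix.one_apply] <;>
      (try field_simp) <;> ring_nf <;> (try simp only [inv_pow]) <;> (try field_simp) <;> try ring
  set c : ℂ := b * (1 - l^2) / (α^2 * l^2) with hc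
  have hzval : z = !![l^2, 0; c, (l^2)⁻¹] := by
    rw [hz, hsinv, hhinv, hs, hh]
    simp only [Matrix.mul_fin_two]
    ext i j
    fin_cases i <;> fin_cases j <;>
      simp [hc] <;>
      (try field_simp) <;> ring_nf <;> (try simp only [inv_pow]) <;> (try field_simp) <;> try ring
  have hzinv : z⁻¹ = !![(l^2)⁻¹, 0; -c, l^2] := by
    apply Matrix.inv_eq_right_inv
    rw [hzval]
    simp only [Matrix.mul_fin_two]
    ext i j
    fin_cases i <;> fin_cases j <;>
      simp [Matrix.one_apply] <;>
      (try field_simp) <;> ring_nf <;> (try simp only [inv_pow]) <;> (try field_simp) <;> try ring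
  have hw1 : s * z * s⁻¹ = !![l^2, 0; c / l^2, (l^2)⁻¹] := by
    rw [hsinv, hzval, hs]
    simp only [Matrix.mul_fin_two]
    ext i j
    fin_cases i <;> fin_cases j <;> simp <;> (try field_simp) <;> (try ring) <;> try tauto
  have hw2 : s * z⁻¹ * s⁻¹ = !![(l^2)⁻¹, 0; -c / l^2, l^2] := by
    rw [hsinv, hzinv, hs]
    simp only [Matrix.mul_fin_two]
    ext i j
    fin_cases i <;> fin_cases j <;> simp <;> (try field_simp) <;> (try ring) <;> try tauto
  set V : ℂ := c * (1 - (l^2)⁻¹) * (l^2 - (l^2)⁻¹) / l^4 with hV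
  have hA : z * (s * z * s⁻¹) = !![l^4, 0; c*l^2 + c/l^4, (l^4)⁻¹] := by
    rw [hw1, hzval]
    simp only [Matrix.mul_fin_two]
    ext i j
    fin_cases i <;> fin_cases j <;> simp <;> (try field_simp) <;> (try ring) <;> try tauto
  have hB : z⁻¹ * (s * z⁻¹ * s⁻¹) = !![(l^4)⁻¹, 0; -(c/l^2) - c, l^4] := by
    rw [hw2, hzinv]
    simp only [Matrix.mul_fin_two]
    ext i j
    fin_cases i <;> fin_cases j <;> simp <;> (try field_simp) <;> (try ring) <;> try tauto
  have hvval : v = !![1, 0; V, 1] := by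
    have : v = (z * (s * z * s⁻¹)) * (z⁻¹ * (s * z⁻¹ * s⁻¹)) := by
      rw [hv, mul_assoc]
    rw [this, hA, hB]
    simp only [Matrix.mul_fin_two]
    ext i j
    fin_cases i <;> fin_cases j <;>
      simp [hV] <;>
      (try field_simp) <;> (try ring) <;> try tauto
  have hVb : V = 0 ↔ b = 0 := by
    have h1 : (1:ℂ) - (l^2)⁻¹ ≠ 0 := sub_ne_zero.mpr fun e => hl2 (inv_eq_one.mp e.symm)
    have h0 : (l:ℂ)^2 ≠ 0 := pow_ne_zero 2 hl
    have h2 : l^2 - (l^2)⁻¹ ≠ 0 := by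
      refine sub_ne_zero.mpr fun e => hl4 ?_
      calc l^4 = l^2 * l^2 := by ring
        _ = l^2 * (l^2)⁻¹ := by rw [← e]
        _ = 1 := mul_inv_cancel₀ h0
    have h3 : (1:ℂ) - l^2 ≠ 0 := sub_ne_zero.mpr fun e => hl2 e.symm
    constructor
    · intro e
      rw [hV, div_eq_zero_iff] at e
      rcases e with e | e
      · rcases mul_eq_zero.mp e with e | e
        · rcases mul_eq_zero.mp e with e | e
          · rw [hc, div_eq_zero_iff] at e
            rcases e with e | e
            · rcases mul_eq_zero.mp e with e | e
              · exact e
              · exact absurd e h3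
            · exact absurd e (mul_ne_zero (pow_ne_zero 2 hα) h0)
          · exact absurd e h1
        · exact absurd e h2
      · exact absurd e (pow_ne_zero 4 hl)
    · intro e
      rw [hV, hc, e]
      ring
  constructor
  · refine ⟨?_, ?_, ?_⟩ <;> rw [hvval] <;> simp
  · rw [hvval, ← hVb]
    constructor
    · intro e
      have := congrFun (congrFun e 1) 0
      simpa [Matrix.one_apply] using this
    · intro e
      rw [e]
      ext i j
      fin_cases i <;> fin_cases j <;> simp [Matrix.one_apply]
end

section
/- Let λ ∈ ℂ with λ ≠ 0 and λ² ≠ 1, set g_1 = [[λ, 0], [0, λ⁻¹]], and let g_2 = [[α, β], [γ, δ]] ∈ SL_2(ℂ). Let c = g_1·g_2·g_1⁻¹·g_2⁻¹ be the commutator. Then: (i) trace(c) = 2 if and only if β = 0 or γ = 0; (ii) the (2,1) entry of c is 0 (i.e. c is upper triangular) if and only if γ = 0 or δ = 0; (iii) the (1,2) entry of c is 0 (i.e. c is lower triangular) if and only if β = 0 or α = 0. -/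
/-- For `g₁ = [[λ,0],[0,λ⁻¹]]` (`λ ≠ 0`, `λ² ≠ 1`) and `g₂ = [[α,β],[γ,δ]] ∈ SL₂(ℂ)`,
the commutator `c = g₁ g₂ g₁⁻¹ g₂⁻¹` satisfies: `trace c = 2 ↔ β = 0 ∨ γ = 0`;
`c` is upper triangular iff `γ = 0 ∨ δ = 0`; `c` is lower triangular iff `β = 0 ∨ α = 0`. -/
theorem commutator_with_diag_triangularity (l α β γ δ : ℂ) (hl : l ≠ 0) (hl2 : l ^ 2 ≠ 1)
    (hdet : α * δ - β * γ = 1) :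
    ∀ c : Matrix (Fin 2) (Fin 2) ℂ,
      c = !![l, 0; 0, l⁻¹] * !![α, β; γ, δ] * (!![l, 0; 0, l⁻¹])⁻¹ * (!![α, β; γ, δ])⁻¹ →
      (Matrix.trace c = 2 ↔ β = 0 ∨ γ = 0) ∧
      (c 1 0 = 0 ↔ γ = 0 ∨ δ = 0) ∧
      (c 0 1 = 0 ↔ β = 0 ∨ α = 0) := by
  intro c hc
  have h1 : (!![l, 0; 0, l⁻¹] : Matrix (Fin 2) (Fin 2) ℂ)⁻¹ = !![l⁻¹, 0; 0, l] := by
    apply Matrix.inv_eq_right_inv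
    ext i j
    fin_cases i <;> fin_cases j <;> simp [hl]
  have h2 : (!![α, β; γ, δ] : Matrix (Fin 2) (Fin 2) ℂ)⁻¹ = !![δ, -β; -γ, α] := by
    apply Matrix.inv_eq_right_inv
    ext i j
    fin_cases i <;> fin_cases j <;> simp <;> first | linear_combination hdet | ring
  rw [h1, h2, Matrix.mul_fin_two, Matrix.mul_fin_two, Matrix.mul_fin_two] at hc
  have hne : l ^ 2 - 1 ≠ 0 := sub_ne_zero.mpr hl2
  subst hc
  have hl' : l * l⁻¹ = 1 := mul_inv_cancel₀ hl
  refine ⟨?_, ?_, ?_⟩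
  · rw [Matrix.trace_fin_two]
    simp only [Matrix.cons_val', Matrix.cons_val_one, Matrix.head_cons, Matrix.cons_val_zero,
      Matrix.empty_val', Matrix.cons_val_fin_one, Matrix.head_fin_const, Matrix.of_apply]
    constructor
    · intro h
      have key : β * γ * (l ^ 2 - 1) ^ 2 = 0 := by
        field_simp at h
        linear_combination -h + 2 * l ^ 2 * hdet
      rcases mul_eq_zero.mp key with h' | h'
      · exact mul_eq_zero.mp h'
      · exact absurd (pow_eq_zero_iff two_ne_zero |>.mp h') hne
    · rintro (h | h) <;> subst h <;> field_simp <;> linear_combination 2 * l ^ 2 * hdet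
  · simp only [Matrix.cons_val', Matrix.cons_val_one, Matrix.head_cons, Matrix.cons_val_zero,
      Matrix.empty_val', Matrix.cons_val_fin_one, Matrix.head_fin_const, Matrix.of_apply]
    constructor
    · intro h
      have key : γ * δ * (l ^ 2 - 1) = 0 := by
        field_simp at h
        linear_combination -h
      rcases mul_eq_zero.mp key with h' | h'
      · exact mul_eq_zero.mp h'
      · exact absurd h' hne
    · rintro (h | h) <;> subst h <;> ring
  · simp only [Matrix.cons_val', Matrix.cons_val_one, Matrix.head_cons, Matrix.cons_val_zero,
      Matrix.empty_val', Matrix.cons_val_fin_one, Matrix.head_fin_const, Matrix.of_apply]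
    constructor
    · intro h
      have key : α * β * (l ^ 2 - 1) = 0 := by
        field_simp at h
        refine mul_left_cancel₀ hl ?_
        linear_combination h
      rcases mul_eq_zero.mp key with h' | h'
      · exact Or.symm (mul_eq_zero.mp h')
      · exact absurd h' hne
    · rintro (h | h) <;> subst h <;> ring
end

section
/- Let u = [[1, 1], [0, 1]] ∈ SL_2(ℂ). Then there exists g ∈ SL_2(ℂ) such that, setting z = u·g·u⁻¹·g⁻¹, the element z·(u·z·u⁻¹)·z⁻¹·(u·z⁻¹·u⁻¹) has trace different from 2 (in particular it is not unipotent). For example, g = [[i√2/2, −i√2/2], [−i√2, 0]] has this property. -/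
/-- For `u = [[1,1],[0,1]]` there exists `g ∈ SL₂(ℂ)` such that the value of the word
`w(x,y) = ⁅⁅x,y⁆, x⁅x,y⁆x⁻¹⁆` at `(u,g)` has trace different from `2` (so is not
unipotent); for example `g = [[i√2/2, -i√2/2],[-i√2, 0]]` has this property. -/
theorem word_value_at_unipotent_not_unipotent :
    ∀ u g : Matrix (Fin 2) (Fin 2) ℂ,
      u = !![1, 1; 0, 1] →
      g = !![Complex.I * (Real.sqrt 2 : ℂ) / 2, -(Complex.I * (Real.sqrt 2 : ℂ) / 2);
             -(Complex.I * (Real.sqrt 2 : ℂ)), 0] →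
      g.det = 1 ∧
      ∀ z : Matrix (Fin 2) (Fin 2) ℂ, z = u * g * u⁻¹ * g⁻¹ →
        Matrix.trace (z * (u * z * u⁻¹) * z⁻¹ * (u * z⁻¹ * u⁻¹)) ≠ 2 := by
  intro u g hu hg
  subst hu hg
  have hs : (Real.sqrt 2 : ℂ) * (Real.sqrt 2 : ℂ) = 2 := by
    rw [← Complex.ofReal_mul, Real.mul_self_sqrt (by norm_num : (0:ℝ) ≤ 2)]
    norm_num
  have hdet : (!![Complex.I * (Real.sqrt 2 : ℂ) / 2, -(Complex.I * (Real.sqrt 2 : ℂ) / 2);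
             -(Complex.I * (Real.sqrt 2 : ℂ)), 0] : Matrix (Fin 2) (Fin 2) ℂ).det = 1 := by
    rw [Matrix.det_fin_two_of]
    linear_combination (-(Complex.I * Complex.I)/2) * hs - Complex.I_mul_I
  refine ⟨hdet, ?_⟩
  intro z hz
  have huinv : (!![1, 1; 0, 1] : Matrix (Fin 2) (Fin 2) ℂ)⁻¹ = !![1, -1; 0, 1] := by
    apply Matrix.inv_eq_right_inv
    rw [Matrix.mul_fin_two, Matrix.one_fin_two]
    norm_num
  have hginv : (!![Complex.I * (Real.sqrt 2 : ℂ) / 2, -(Complex.I * (Real.sqrt 2 : ℂ) / 2);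
             -(Complex.I * (Real.sqrt 2 : ℂ)), 0] : Matrix (Fin 2) (Fin 2) ℂ)⁻¹ =
      !![0, Complex.I * (Real.sqrt 2 : ℂ) / 2;
         Complex.I * (Real.sqrt 2 : ℂ), Complex.I * (Real.sqrt 2 : ℂ) / 2] := by
    apply Matrix.inv_eq_right_inv
    rw [Matrix.mul_fin_two, Matrix.one_fin_two]
    ext i j
    fin_cases i <;> fin_cases j <;> simp
    all_goals try ring
    all_goals linear_combination (-(Complex.I * Complex.I)/2) * hs - Complex.I_mul_I
  have hzval : z = !![0, 1/2; -2, 0] := by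
    rw [hz, huinv, hginv]
    rw [Matrix.mul_fin_two, Matrix.mul_fin_two, Matrix.mul_fin_two]
    ext i j
    fin_cases i <;> fin_cases j <;> simp
    all_goals try ring
    all_goals try linear_combination (-(Complex.I * Complex.I)/4) * hs - (1/2 : ℂ) * Complex.I_mul_I
    all_goals linear_combination (Complex.I * Complex.I) * hs + (2 : ℂ) * Complex.I_mul_I
  have hzinv : z⁻¹ = !![0, -(1/2); 2, 0] := by
    rw [hzval]
    apply Matrix.inv_eq_right_inv
    rw [Matrix.mul_fin_two, Matrix.one_fin_two]
    norm_num
  rw [hzinv, hzval, huinv]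
  simp only [Matrix.mul_fin_two, Matrix.trace_fin_two_of]
  norm_num
end

section
/- Let g, h ∈ SL_2(ℂ), where g is diagonalizable and satisfies g² ≠ I and g² ≠ −I (equivalently, g is a semisimple element whose order in SL_2(ℂ) is not 1, 2, or 4). Set s = g·h·g⁻¹·h⁻¹ and suppose that s is a diagonal matrix with s ≠ I and s ≠ −I. If g·s·g⁻¹ is upper triangular, then g is upper triangular. -/
/-- Let `g, h ∈ SL₂(ℂ)` with `g` diagonalizable and `g² ≠ ±1`, and suppose the commutator
`s = ⁅g,h⁆` is diagonal with `s ≠ ±1`. If `g s g⁻¹` is upper triangular, then `g` is upper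
triangular. -/
theorem borel_containment_of_commutator (g h : Matrix.SpecialLinearGroup (Fin 2) ℂ)
    (hdiag : ∃ P : GL (Fin 2) ℂ,
      Matrix.IsDiag ((↑(P⁻¹) : Matrix (Fin 2) (Fin 2) ℂ) * (↑g : Matrix (Fin 2) (Fin 2) ℂ) *
        (↑P : Matrix (Fin 2) (Fin 2) ℂ)))
    (hg1 : (↑(g ^ 2) : Matrix (Fin 2) (Fin 2) ℂ) ≠ 1)
    (hg2 : (↑(g ^ 2) : Matrix (Fin 2) (Fin 2) ℂ) ≠ -1) :
    ∀ s : Matrix.SpecialLinearGroup (Fin 2) ℂ,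
      s = g * h * g⁻¹ * h⁻¹ →
      Matrix.IsDiag (↑s : Matrix (Fin 2) (Fin 2) ℂ) →
      (↑s : Matrix (Fin 2) (Fin 2) ℂ) ≠ 1 →
      (↑s : Matrix (Fin 2) (Fin 2) ℂ) ≠ -1 →
      (↑(g * s * g⁻¹) : Matrix (Fin 2) (Fin 2) ℂ) 1 0 = 0 →
      (↑g : Matrix (Fin 2) (Fin 2) ℂ) 1 0 = 0 := by
  intro s hs hsdiag hs1 hsm1 htri
  set A : Matrix (Fin 2) (Fin 2) ℂ := ↑g with hA
  set S : Matrix (Fin 2) (Fin 2) ℂ := ↑s with hS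
  set H : Matrix (Fin 2) (Fin 2) ℂ := ↑h with hH
  have hS01 : S 0 1 = 0 := hsdiag (by decide)
  have hS10 : S 1 0 = 0 := hsdiag (by decide)
  have detg : A 0 0 * A 1 1 - A 0 1 * A 1 0 = 1 := by
    rw [← Matrix.det_fin_two]; exact g.prop
  have dets : S 0 0 * S 1 1 - S 0 1 * S 1 0 = 1 := by
    rw [← Matrix.det_fin_two]; exact s.prop
  have deth : H 0 0 * H 1 1 - H 0 1 * H 1 0 = 1 := by
    rw [← Matrix.det_fin_two]; exact h.prop
  have hads : S 0 0 * S 1 1 = 1 := by linear_combination dets + S 0 1 * hS10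
  -- s ≠ ±1 means the diagonal entries are distinct
  have ha1 : S 0 0 ≠ 1 := by
    intro h1
    apply hs1
    have hd1 : S 1 1 = 1 := by linear_combination hads - S 1 1 * h1
    ext i j
    fin_cases i <;> fin_cases j <;> simp_all [Matrix.one_apply]
  have ham1 : S 0 0 ≠ -1 := by
    intro h1
    apply hsm1
    have hd1 : S 1 1 = -1 := by linear_combination -hads + S 1 1 * h1
    ext i j
    fin_cases i <;> fin_cases j <;> simp_all [Matrix.one_apply]
  have hane : S 0 0 ≠ S 1 1 := by
    intro hae
    rcases mul_self_eq_one_iff.mp (by linear_combination hads + S 0 0 * hae :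
        S 0 0 * S 0 0 = 1) with h' | h'
    · exact ha1 h'
    · exact ham1 h'
  -- the (1,0) entry of g s g⁻¹
  have key : A 1 0 * A 1 1 * (S 0 0 - S 1 1) = 0 := by
    have h := htri
    rw [show ((g * s * g⁻¹ : Matrix.SpecialLinearGroup (Fin 2) ℂ) :
        Matrix (Fin 2) (Fin 2) ℂ) = A * S * Matrix.adjugate A by
      simp [Matrix.SpecialLinearGroup.coe_inv, hA, hS]] at h
    rw [Matrix.adjugate_fin_two] at h
    simp only [Matrix.mul_apply, Fin.sum_univ_two, Matrix.of_apply, Matrix.cons_val',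
      Matrix.cons_val_zero, Matrix.cons_val_one, Matrix.head_cons, Matrix.empty_val',
      Matrix.cons_val_fin_one, Matrix.head_fin_const] at h
    simp only [hS01, hS10, mul_zero, zero_mul, add_zero, zero_add] at h
    linear_combination h
  by_contra hr
  have ht : A 1 1 = 0 := by
    rcases mul_eq_zero.mp key with h' | h'
    · rcases mul_eq_zero.mp h' with h' | h'
      · exact absurd h' hr
      · exact h'
    · exact absurd (sub_eq_zero.mp h') hane
  have hqr : A 0 1 * A 1 0 = -1 := by linear_combination -detg + A 0 0 * ht
  have hp : A 0 0 ≠ 0 := by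
    intro hp0
    apply hg2
    have hg2' : ((g ^ 2 : Matrix.SpecialLinearGroup (Fin 2) ℂ) :
        Matrix (Fin 2) (Fin 2) ℂ) = A * A := by
      simp [pow_two, hA]
    rw [hg2']
    ext i j
    fin_cases i <;> fin_cases j <;>
      simp only [Matrix.mul_apply, Fin.sum_univ_two, Matrix.neg_apply, Matrix.one_apply] <;>
      simp <;>
      first
        | linear_combination hqr + A 0 0 * hp0
        | linear_combination A 0 1 * hp0 + A 0 1 * ht
        | linear_combination A 1 0 * hp0 + A 1 0 * ht
        | linear_combination hqr + A 1 1 * ht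
        | linear_combination -hqr - A 0 0 * hp0
        | linear_combination -hqr - A 1 1 * ht
  -- commutator relation : s h g = g h
  have hgs : s * h * g = g * h := by rw [hs]; group
  have hM : S * H * A = A * H := by
    rw [hS, hH, hA, ← Matrix.SpecialLinearGroup.coe_mul, ← Matrix.SpecialLinearGroup.coe_mul,
      ← Matrix.SpecialLinearGroup.coe_mul, hgs]
  have E : ∀ i j, (S * H * A) i j = (A * H) i j := fun i j => by rw [hM]
  have E00 := E 0 0
  have E01 := E 0 1
  have E10 := E 1 0
  have E11 := E 1 1
  simp only [Matrix.mul_apply, Fin.sum_univ_two] at E00 E01 E10 E11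
  simp only [hS01, hS10, ht, mul_zero, zero_mul, add_zero, zero_add] at E00 E01 E10 E11
  -- E11 : d u q = r f  :  derive u q = a r f
  have huq : H 1 0 * A 0 1 = S 0 0 * A 1 0 * H 0 1 := by
    linear_combination S 0 0 * E11 - H 1 0 * A 0 1 * hads
  have he : H 0 0 = 0 := by
    have hkey : A 0 0 * (1 - S 0 0) * H 0 0 = 0 := by
      linear_combination -E00 - huq
    rcases mul_eq_zero.mp hkey with h' | h'
    · rcases mul_eq_zero.mp h' with h' | h'
      · exact absurd h' hp
      · exact absurd (by linear_combination -h' : S 0 0 = 1) ha1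
    · exact h'
  have hd0 : S 1 1 ≠ 0 := by
    intro h0
    exact one_ne_zero (α := ℂ) (by linear_combination -hads + S 0 0 * h0)
  have hup : H 1 0 * A 0 0 + H 1 1 * A 1 0 = 0 := by
    have hkey : S 1 1 * (H 1 0 * A 0 0 + H 1 1 * A 1 0) = 0 := by
      linear_combination E10 + A 1 0 * he
    rcases mul_eq_zero.mp hkey with h' | h'
    · exact absurd h' hd0
    · exact h'
  have heq01 : A 0 0 * H 0 1 + A 0 1 * H 1 1 = 0 := by
    linear_combination -E01 + S 0 0 * A 0 1 * he
  have huqfr : H 1 0 * A 0 1 = H 0 1 * A 1 0 := by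
    have hkey : A 0 0 * (H 1 0 * A 0 1 - H 0 1 * A 1 0) = 0 := by
      linear_combination A 0 1 * hup - A 1 0 * heq01
    rcases mul_eq_zero.mp hkey with h' | h'
    · exact absurd h' hp
    · linear_combination h'
  have hf : H 0 1 = 0 := by
    have hkey : H 0 1 * A 1 0 * (1 - S 0 0) = 0 := by
      linear_combination huq - huqfr
    rcases mul_eq_zero.mp hkey with h' | h'
    · rcases mul_eq_zero.mp h' with h' | h'
      · exact h'
      · exact absurd h' hr
    · exact absurd (by linear_combination -h' : S 0 0 = 1) ha1
  exact one_ne_zero (α := ℂ) (by linear_combination -deth + H 1 1 * he - H 1 0 * hf)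
end

section
/- Let g_1 ∈ SL_2(ℂ) satisfy g_1² = −I. Then for every g_2 ∈ SL_2(ℂ), writing z = g_1·g_2·g_1⁻¹·g_2⁻¹, one has g_1·z·g_1⁻¹ = z⁻¹, and consequently z·(g_1·z·g_1⁻¹)·z⁻¹·(g_1·z⁻¹·g_1⁻¹) = I; that is, the word w(x,y) = ⁅⁅x,y⁆, x⁅x,y⁆x⁻¹⁆ evaluates to the identity at every pair (g_1, g_2) with g_1² = −I. -/
/-- If `g₁ ∈ SL₂(ℂ)` satisfies `g₁² = -1`, then for every `g₂`, with `z = ⁅g₁,g₂⁆` one has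
`g₁ z g₁⁻¹ = z⁻¹`, and the word `w(x,y) = ⁅⁅x,y⁆, x⁅x,y⁆x⁻¹⁆` evaluates to the identity
at `(g₁, g₂)`. -/
theorem word_trivial_on_order_four_class (g₁ : Matrix.SpecialLinearGroup (Fin 2) ℂ)
    (hg : (↑(g₁ ^ 2) : Matrix (Fin 2) (Fin 2) ℂ) = -1)
    (g₂ : Matrix.SpecialLinearGroup (Fin 2) ℂ) :
    ∀ z : Matrix.SpecialLinearGroup (Fin 2) ℂ,
      z = g₁ * g₂ * g₁⁻¹ * g₂⁻¹ →
      g₁ * z * g₁⁻¹ = z⁻¹ ∧ z * (g₁ * z * g₁⁻¹) * z⁻¹ * (g₁ * z⁻¹ * g₁⁻¹) = 1 := by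
  intro z hz
  have hc : g₂ * g₁ ^ 2 = g₁ ^ 2 * g₂ := by
    apply Subtype.ext
    rw [Matrix.SpecialLinearGroup.coe_mul, Matrix.SpecialLinearGroup.coe_mul, hg]
    simp
  have h1 : g₁ * z * g₁⁻¹ = z⁻¹ := by
    subst hz
    have : g₁ * (g₁ * g₂ * g₁⁻¹ * g₂⁻¹) * g₁⁻¹ = g₁ ^ 2 * g₂ * g₁⁻¹ * g₂⁻¹ * g₁⁻¹ := by
      rw [pow_two]; group
    rw [this, ← hc]
    group
  refine ⟨h1, ?_⟩
  have h2 : g₁ * z⁻¹ * g₁⁻¹ = z := by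
    have := congrArg (·⁻¹) h1.symm
    rw [mul_assoc]; simpa [mul_assoc] using this.symm
  rw [h1, h2]
  group
end

section
/- For every g ∈ SL_2(ℂ) there exist x, y ∈ SL_2(ℂ) such that x·y·x⁻¹·y⁻¹ = g or x·y·x⁻¹·y⁻¹ = −g. Equivalently, the word map on PSL_2(ℂ) = SL_2(ℂ)/{±I} induced by the commutator word w = ⁅x,y⁆ is surjective. -/
open Matrix

private lemma comm_of_rel {G : Type*} [Group G] {x y c : G} (h : x * y = c * (y * x)) :
    x * y * x⁻¹ * y⁻¹ = c := by
  have hx : x * y * x⁻¹ * y⁻¹ * (y * x) = c * (y * x) := by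
    rw [← h]; group
  exact mul_right_cancel hx

private lemma conj_comm' {G : Type*} [Group G] {x y c u : G} (h : x * y * x⁻¹ * y⁻¹ = c) :
    (u*x*u⁻¹) * (u*y*u⁻¹) * (u*x*u⁻¹)⁻¹ * (u*y*u⁻¹)⁻¹ = u * c * u⁻¹ := by
  rw [← h]; group

private lemma companion_comm (t : ℂ) (ht1 : t ≠ 1) (ht2 : t ≠ 2)
    (c : Matrix.SpecialLinearGroup (Fin 2) ℂ)
    (hc : (↑c : Matrix (Fin 2) (Fin 2) ℂ) = !![0,-1;1,t]) :
    ∃ x y : Matrix.SpecialLinearGroup (Fin 2) ℂ, x * y * x⁻¹ * y⁻¹ = c := by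
  obtain ⟨m, hm2⟩ := IsAlgClosed.exists_pow_nat_eq (k := ℂ) (t - 1)⁻¹ (n := 2) (by norm_num)
  have htne : t - 1 ≠ 0 := sub_ne_zero.mpr ht1
  have hm0 : m ≠ 0 := by
    intro h0
    rw [h0] at hm2
    exact htne (inv_eq_zero.mp (by simpa using hm2.symm))
  have hm1 : m ^ 2 - 1 ≠ 0 := by
    intro h0
    have h2 : (t - 1)⁻¹ = 1 := by rw [← hm2]; linear_combination h0
    have h3 : (1 : ℂ) = t - 1 := by field_simp at h2; exact h2
    exact ht2 (by linear_combination -h3)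
  set k : ℂ := (m ^ 2 - 1)⁻¹ with hk
  refine ⟨⟨!![m, 0; 0, m⁻¹], ?_⟩, ⟨!![-k, 1; k, -m^2], ?_⟩, ?_⟩
  · simp [Matrix.det_fin_two_of]
    field_simp
  · simp [Matrix.det_fin_two_of, hk]
    field_simp
  · apply comm_of_rel
    apply Subtype.ext
    push_cast [Matrix.SpecialLinearGroup.coe_mul, hc]
    have htm : t = 1 + (m^2)⁻¹ := by
      rw [hm2]; field_simp; ring
    subst htm
    erw [Matrix.SpecialLinearGroup.coe_mul, Matrix.SpecialLinearGroup.coe_mul]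
    ext i j
    fin_cases i <;> fin_cases j <;>
      simp [Matrix.mul_apply, Fin.sum_univ_two, hk] <;> field_simp <;> ring

set_option linter.unreachableTactic false in
set_option linter.unusedTactic false in
private lemma exists_cyclic (h : Matrix.SpecialLinearGroup (Fin 2) ℂ)
    (h1 : h.val ≠ 1) (hneg : h.val ≠ -1) :
    ∃ P : Matrix (Fin 2) (Fin 2) ℂ, P.det ≠ 0 ∧
      h.val * P = P * !![0, -1; 1, h.val 0 0 + h.val 1 1] := by
  have hdet : h.val 0 0 * h.val 1 1 - h.val 0 1 * h.val 1 0 = 1 := by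
    have := h.2
    rwa [Matrix.det_fin_two] at this
  by_cases hc : h.val 1 0 ≠ 0
  · refine ⟨!![1, h.val 0 0; 0, h.val 1 0], by simp [Matrix.det_fin_two_of, hc], ?_⟩
    ext i j
    fin_cases i <;> fin_cases j <;>
      simp [Matrix.mul_apply, Fin.sum_univ_two] <;> first | ring1 | linear_combination hdet | linear_combination -hdet | linear_combination -hdet - (h.val 0 1) * hc | linear_combination hdet + (h.val 0 1) * hc
  push_neg at hc
  by_cases hb : h.val 0 1 ≠ 0
  · refine ⟨!![0, h.val 0 1; 1, h.val 1 1], by simp [Matrix.det_fin_two_of, hb], ?_⟩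
    ext i j
    fin_cases i <;> fin_cases j <;>
      simp [Matrix.mul_apply, Fin.sum_univ_two] <;> first | ring1 | linear_combination hdet | linear_combination -hdet | linear_combination -hdet - (h.val 0 1) * hc | linear_combination hdet + (h.val 0 1) * hc
  push_neg at hb
  by_cases had : h.val 0 0 ≠ h.val 1 1
  · refine ⟨!![1, h.val 0 0; 1, h.val 1 1],
      by simp [Matrix.det_fin_two_of]; exact sub_ne_zero.mpr (Ne.symm had), ?_⟩
    ext i j
    fin_cases i <;> fin_cases j <;>
      simp [Matrix.mul_apply, Fin.sum_univ_two, hb, hc] <;> first | ring1 | linear_combination hdet | linear_combination -hdet | linear_combination -hdet - (h.val 0 1) * hc | linear_combination hdet + (h.val 0 1) * hc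
  push_neg at had
  exfalso
  have ha2 : (h.val 0 0 - 1) * (h.val 0 0 + 1) = 0 := by
    rw [hb, hc] at hdet; rw [← had] at hdet; linear_combination hdet
  rcases mul_eq_zero.mp ha2 with h0 | h0
  · apply h1
    have ha : h.val 0 0 = 1 := by linear_combination h0
    ext i j
    fin_cases i <;> fin_cases j <;>
      simp [ha, hb, hc, ← had, Matrix.one_apply]
  · apply hneg
    have ha : h.val 0 0 = -1 := by linear_combination h0
    ext i j
    fin_cases i <;> fin_cases j <;>
      simp [ha, hb, hc, ← had, Matrix.one_apply]

/-- Lemma A: a noncentral element with trace ∉ {1,2} is a commutator. -/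
private lemma lemA (h : Matrix.SpecialLinearGroup (Fin 2) ℂ)
    (h1 : h.val ≠ 1) (hneg : h.val ≠ -1)
    (ht1 : h.val 0 0 + h.val 1 1 ≠ 1) (ht2 : h.val 0 0 + h.val 1 1 ≠ 2) :
    ∃ x y : Matrix.SpecialLinearGroup (Fin 2) ℂ, x * y * x⁻¹ * y⁻¹ = h := by
  set t : ℂ := h.val 0 0 + h.val 1 1 with hts
  obtain ⟨P, hPdet, hPC⟩ := exists_cyclic h h1 hneg
  obtain ⟨s, hs2⟩ := IsAlgClosed.exists_pow_nat_eq (k := ℂ) P.det (n := 2) (by norm_num)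
  have hs0 : s ≠ 0 := by
    intro h0; rw [h0] at hs2; exact hPdet (by simpa using hs2.symm)
  have hQdet : (s⁻¹ • P).det = 1 := by
    rw [Matrix.det_smul, ← hs2]
    simp [Fintype.card_fin]
    field_simp
  set cEl : Matrix.SpecialLinearGroup (Fin 2) ℂ :=
    ⟨!![0, -1; 1, t], by simp [Matrix.det_fin_two_of]⟩ with hcEl
  set u : Matrix.SpecialLinearGroup (Fin 2) ℂ := ⟨s⁻¹ • P, hQdet⟩ with hu
  have hconj : h * u = u * cEl := by
    apply Subtype.ext
    push_cast [Matrix.SpecialLinearGroup.coe_mul]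
    show h.val * (s⁻¹ • P) = (s⁻¹ • P) * !![0, -1; 1, t]
    rw [Matrix.mul_smul, Matrix.smul_mul, hPC]
  have hhc : h = u * cEl * u⁻¹ := by
    rw [← hconj]; group
  obtain ⟨x, y, hxy⟩ := companion_comm t ht1 ht2 cEl rfl
  exact ⟨u*x*u⁻¹, u*y*u⁻¹, by rw [conj_comm' hxy, ← hhc]⟩

/-- Surjectivity of the commutator word map on `PSL₂(ℂ)`: for every `g ∈ SL₂(ℂ)` there are
`x, y ∈ SL₂(ℂ)` with `⁅x,y⁆ = g` or `⁅x,y⁆ = -g`. -/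
theorem commutator_word_map_surjective_PSL2C (g : Matrix.SpecialLinearGroup (Fin 2) ℂ) :
    ∃ x y : Matrix.SpecialLinearGroup (Fin 2) ℂ,
      (↑(x * y * x⁻¹ * y⁻¹) : Matrix (Fin 2) (Fin 2) ℂ) = (↑g : Matrix (Fin 2) (Fin 2) ℂ) ∨
      (↑(x * y * x⁻¹ * y⁻¹) : Matrix (Fin 2) (Fin 2) ℂ) = -(↑g : Matrix (Fin 2) (Fin 2) ℂ) := by
  by_cases h1 : g.val = 1
  · exact ⟨1, 1, Or.inl (by simp [h1])⟩
  by_cases hneg : g.val = -1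
  · exact ⟨1, 1, Or.inr (by simp [hneg])⟩
  by_cases ht : g.val 0 0 + g.val 1 1 ≠ 1 ∧ g.val 0 0 + g.val 1 1 ≠ 2
  · obtain ⟨x, y, hxy⟩ := lemA g h1 hneg ht.1 ht.2
    exact ⟨x, y, Or.inl (by rw [hxy])⟩
  · -- trace is 1 or 2; use -g
    have hdetneg : (-g.val).det = 1 := by
      simp [Matrix.det_neg, g.2]
    set h : Matrix.SpecialLinearGroup (Fin 2) ℂ := ⟨-g.val, hdetneg⟩ with hh
    have hh1 : h.val ≠ 1 := by
      intro h0
      apply hneg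
      have : g.val = -h.val := by simp [hh]
      rw [this, h0]
    have hhneg : h.val ≠ -1 := by
      intro h0
      apply h1
      have : g.val = -h.val := by simp [hh]
      rw [this, h0]; simp
    have htr : h.val 0 0 + h.val 1 1 = -(g.val 0 0 + g.val 1 1) := by
      simp [hh]
      try ring
    rw [not_and_or, not_ne_iff, not_ne_iff] at ht
    have hA : h.val 0 0 + h.val 1 1 ≠ 1 ∧ h.val 0 0 + h.val 1 1 ≠ 2 := by
      rw [htr]
      rcases ht with ht | ht
      · rw [ht]
        refine ⟨fun hx => ?_, fun hx => ?_⟩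
        · norm_num at hx
        · norm_num at hx
      · rw [ht]
        refine ⟨fun hx => ?_, fun hx => ?_⟩
        · norm_num at hx
        · norm_num at hx
    obtain ⟨x, y, hxy⟩ := lemA h hh1 hhneg hA.1 hA.2
    exact ⟨x, y, Or.inr (by rw [hxy])⟩
end

section
/- Let m, n be positive integers. For every g ∈ SL_2(ℂ) there exist x, y ∈ SL_2(ℂ) such that x^m·y^n·x^{−m}·y^{−n} = g or x^m·y^n·x^{−m}·y^{−n} = −g. Equivalently, the word map on PSL_2(ℂ) = SL_2(ℂ)/{±I} induced by the word w = ⁅x^m, y^n⁆ is surjective. -/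
open Matrix

abbrev SL2C := Matrix.SpecialLinearGroup (Fin 2) ℂ

def sl2 (a b c d : ℂ) (h : a * d - b * c = 1) : SL2C :=
  ⟨!![a, b; c, d], by rw [Matrix.det_fin_two_of]; linear_combination h⟩

@[simp] lemma sl2_coe (a b c d : ℂ) (h) :
    (↑(sl2 a b c d h) : Matrix (Fin 2) (Fin 2) ℂ) = !![a, b; c, d] := rfl

lemma sl2_inv (a b c d : ℂ) (h) :
    (sl2 a b c d h)⁻¹ = sl2 d (-b) (-c) a (by linear_combination h) := by
  apply inv_eq_of_mul_eq_one_right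
  apply Subtype.ext
  rw [Matrix.SpecialLinearGroup.coe_mul, sl2_coe, sl2_coe, Matrix.mul_fin_two,
    Matrix.SpecialLinearGroup.coe_one, Matrix.one_fin_two]
  ext i j
  fin_cases i <;> fin_cases j <;> simp <;> first | ring1 | linear_combination h

lemma diag_pow (s t : ℂ) (k : ℕ) : (!![s, 0; 0, t]) ^ k = !![s ^ k, 0; 0, t ^ k] := by
  induction k with
  | zero => simp [Matrix.one_fin_two]
  | succ k ih =>
    rw [pow_succ, ih, Matrix.mul_fin_two]
    ext i j
    fin_cases i <;> fin_cases j <;> simp [pow_succ]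

lemma conj_pow' {G : Type*} [Group G] (c x : G) (k : ℕ) :
    (c * x * c⁻¹) ^ k = c * x ^ k * c⁻¹ := by
  induction k with
  | zero => simp
  | succ k ih => rw [pow_succ, ih, pow_succ]; group

def compSL (τ : ℂ) : SL2C := sl2 0 (-1) 1 τ (by ring)

lemma conj_to_companion (g : SL2C)
    (h : (↑g : Matrix (Fin 2) (Fin 2) ℂ) 0 1 ≠ 0 ∨ (↑g : Matrix (Fin 2) (Fin 2) ℂ) 1 0 ≠ 0 ∨
      (↑g : Matrix (Fin 2) (Fin 2) ℂ) 0 0 ≠ (↑g : Matrix (Fin 2) (Fin 2) ℂ) 1 1) :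
    ∃ P : SL2C, g = P * compSL ((↑g : Matrix (Fin 2) (Fin 2) ℂ) 0 0
      + (↑g : Matrix (Fin 2) (Fin 2) ℂ) 1 1) * P⁻¹ := by
  set a : ℂ := (↑g : Matrix (Fin 2) (Fin 2) ℂ) 0 0 with ha
  set b : ℂ := (↑g : Matrix (Fin 2) (Fin 2) ℂ) 0 1 with hb
  set c : ℂ := (↑g : Matrix (Fin 2) (Fin 2) ℂ) 1 0 with hc
  set d : ℂ := (↑g : Matrix (Fin 2) (Fin 2) ℂ) 1 1 with hd
  have hdet : a * d - b * c = 1 := by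
    have h2 := g.2
    rw [Matrix.det_fin_two] at h2
    exact h2
  have hg : (↑g : Matrix (Fin 2) (Fin 2) ℂ) = !![a, b; c, d] := Matrix.eta_fin_two _
  suffices h' : ∃ P : SL2C,
      (↑g : Matrix (Fin 2) (Fin 2) ℂ) * (↑P : Matrix (Fin 2) (Fin 2) ℂ)
        = (↑P : Matrix (Fin 2) (Fin 2) ℂ) * (↑(compSL (a + d)) : Matrix (Fin 2) (Fin 2) ℂ) by
    obtain ⟨P, hP⟩ := h'
    refine ⟨P, ?_⟩
    have hPP : g * P = P * compSL (a + d) := Subtype.ext (by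
      rw [Matrix.SpecialLinearGroup.coe_mul, Matrix.SpecialLinearGroup.coe_mul]; exact hP)
    rw [← hPP]; group
  by_cases hbne : b ≠ 0
  · obtain ⟨l, hl⟩ := IsAlgClosed.exists_pow_nat_eq (-b⁻¹) zero_lt_two
    have hlb : l ^ 2 * b = -1 := by rw [hl]; field_simp
    refine ⟨sl2 0 (l*b) l (l*d) (by linear_combination -hlb), ?_⟩
    rw [hg, sl2_coe, compSL, sl2_coe, Matrix.mul_fin_two, Matrix.mul_fin_two]
    ext i j
    fin_cases i <;> fin_cases j <;> simp <;>
      first | ring1 | linear_combination (-l)*hdet | linear_combination l*hdet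
  · by_cases hcne : c ≠ 0
    · obtain ⟨l, hl⟩ := IsAlgClosed.exists_pow_nat_eq c⁻¹ zero_lt_two
      have hlc : l ^ 2 * c = 1 := by rw [hl]; field_simp
      refine ⟨sl2 l (l*a) 0 (l*c) (by linear_combination hlc), ?_⟩
      rw [hg, sl2_coe, compSL, sl2_coe, Matrix.mul_fin_two, Matrix.mul_fin_two]
      ext i j
      fin_cases i <;> fin_cases j <;> simp <;>
        first | ring1 | linear_combination (-l)*hdet | linear_combination l*hdet
    · push_neg at hbne hcne
      have had : a ≠ d := by
        rcases h with h1 | h2 | h3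
        · exact absurd hbne h1
        · exact absurd hcne h2
        · exact h3
      obtain ⟨l, hl⟩ := IsAlgClosed.exists_pow_nat_eq (d - a)⁻¹ zero_lt_two
      have hlda : l ^ 2 * (d - a) = 1 := by
        rw [hl]; field_simp [sub_ne_zero.mpr (Ne.symm had)]
      have hdet3 : a * d = 1 := by linear_combination hdet + c * hbne
      refine ⟨sl2 l (l*a) l (l*d) (by linear_combination hlda), ?_⟩
      rw [hg, hbne, hcne, sl2_coe, compSL, sl2_coe, Matrix.mul_fin_two, Matrix.mul_fin_two]
      ext i j
      fin_cases i <;> fin_cases j <;> simp <;>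
        first | ring1 | linear_combination (-l)*hdet3 | linear_combination l*hdet3

/-- Surjectivity of the word map `w = ⁅xᵐ, yⁿ⁆` on `PSL₂(ℂ)`: for positive integers `m, n`
and every `g ∈ SL₂(ℂ)` there are `x, y ∈ SL₂(ℂ)` with `xᵐ yⁿ x⁻ᵐ y⁻ⁿ = ±g`. -/
theorem power_commutator_word_map_surjective_PSL2C (m n : ℕ) (hm : 0 < m) (hn : 0 < n)
    (g : Matrix.SpecialLinearGroup (Fin 2) ℂ) :
    ∃ x y : Matrix.SpecialLinearGroup (Fin 2) ℂ,
      (↑(x ^ m * y ^ n * (x ^ m)⁻¹ * (y ^ n)⁻¹) : Matrix (Fin 2) (Fin 2) ℂ)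
          = (↑g : Matrix (Fin 2) (Fin 2) ℂ) ∨
      (↑(x ^ m * y ^ n * (x ^ m)⁻¹ * (y ^ n)⁻¹) : Matrix (Fin 2) (Fin 2) ℂ)
          = -(↑g : Matrix (Fin 2) (Fin 2) ℂ) := by
  by_cases hg1 : (↑g : Matrix (Fin 2) (Fin 2) ℂ) = 1
  · exact ⟨1, 1, Or.inl (by simp [hg1])⟩
  by_cases hg2 : (↑g : Matrix (Fin 2) (Fin 2) ℂ) = -1
  · exact ⟨1, 1, Or.inr (by simp [hg2])⟩
  -- g is non-central
  have hnc : (↑g : Matrix (Fin 2) (Fin 2) ℂ) 0 1 ≠ 0 ∨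
      (↑g : Matrix (Fin 2) (Fin 2) ℂ) 1 0 ≠ 0 ∨
      (↑g : Matrix (Fin 2) (Fin 2) ℂ) 0 0 ≠ (↑g : Matrix (Fin 2) (Fin 2) ℂ) 1 1 := by
    by_contra hcon
    push_neg at hcon
    obtain ⟨e1, e2, e3⟩ := hcon
    have hdet : (↑g : Matrix (Fin 2) (Fin 2) ℂ) 0 0 * (↑g : Matrix (Fin 2) (Fin 2) ℂ) 1 1
        - (↑g : Matrix (Fin 2) (Fin 2) ℂ) 0 1 * (↑g : Matrix (Fin 2) (Fin 2) ℂ) 1 0 = 1 := by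
      rw [← Matrix.det_fin_two]; exact g.2
    have ha2 : (↑g : Matrix (Fin 2) (Fin 2) ℂ) 0 0 * (↑g : Matrix (Fin 2) (Fin 2) ℂ) 0 0 = 1 := by
      linear_combination hdet + (↑g : Matrix (Fin 2) (Fin 2) ℂ) 0 0 * e3
        + (↑g : Matrix (Fin 2) (Fin 2) ℂ) 0 1 * e2
    rcases mul_self_eq_one_iff.mp ha2 with h1 | h1
    · apply hg1
      rw [Matrix.eta_fin_two (↑g : Matrix (Fin 2) (Fin 2) ℂ), e1, e2, ← e3, h1]
      rw [Matrix.one_fin_two]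
    · apply hg2
      rw [Matrix.eta_fin_two (↑g : Matrix (Fin 2) (Fin 2) ℂ), e1, e2, ← e3, h1]
      ext i j
      fin_cases i <;> fin_cases j <;> simp
  set τ : ℂ := (↑g : Matrix (Fin 2) (Fin 2) ℂ) 0 0 + (↑g : Matrix (Fin 2) (Fin 2) ℂ) 1 1 with hτ
  obtain ⟨P, hP⟩ := conj_to_companion g hnc
  -- construct the model commutator with trace τ
  obtain ⟨s, hs⟩ := IsAlgClosed.exists_pow_nat_eq (2 : ℂ) hm
  obtain ⟨r, hr⟩ := IsAlgClosed.exists_pow_nat_eq (2 : ℂ) hn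
  obtain ⟨w, hw⟩ := IsAlgClosed.exists_pow_nat_eq (1 + 64*(τ-2)/81 : ℂ) zero_lt_two
  set u : ℂ := (w - 1) / 2 with hudef
  have hu : u ^ 2 + u = 16 * (τ - 2) / 81 := by
    have h4 : u ^ 2 + u = (w ^ 2 - 1) / 4 := by rw [hudef]; ring
    rw [h4, hw]; ring
  have hs0 : s ≠ 0 := by
    rintro rfl; rw [zero_pow hm.ne'] at hs; exact two_ne_zero hs.symm
  have hr0 : r ≠ 0 := by
    rintro rfl; rw [zero_pow hn.ne'] at hr; exact two_ne_zero hr.symm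
  have h2det : (2 : ℂ) * 2⁻¹ - 0 * 0 = 1 := by norm_num
  set a2 : SL2C := sl2 2 0 0 2⁻¹ h2det with ha2def
  set C : SL2C := sl2 1 u 1 (1+u) (by ring) with hCdef
  set b2 : SL2C := C * a2 * C⁻¹ with hb2def
  set x₀ : SL2C := sl2 s 0 0 s⁻¹ (by field_simp; norm_num) with hx0def
  set y₀ : SL2C := C * sl2 r 0 0 r⁻¹ (by field_simp; norm_num) * C⁻¹ with hy0def
  have hx : x₀ ^ m = a2 := by
    apply Subtype.ext
    rw [Matrix.SpecialLinearGroup.coe_pow, hx0def, ha2def, sl2_coe, sl2_coe, diag_pow,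
      inv_pow, hs]
  have hrpow : (sl2 r 0 0 r⁻¹ (by field_simp; norm_num : r * r⁻¹ - 0 * 0 = 1)) ^ n = a2 := by
    apply Subtype.ext
    rw [Matrix.SpecialLinearGroup.coe_pow, ha2def, sl2_coe, sl2_coe, diag_pow, inv_pow, hr]
  have hy : y₀ ^ n = b2 := by
    rw [hy0def, conj_pow', hrpow, hb2def]
  set M : SL2C := a2 * b2 * a2⁻¹ * b2⁻¹ with hMdef
  have hCinv : C⁻¹ = sl2 (1+u) (-u) (-1) 1 (by ring) := by rw [hCdef, sl2_inv]
  have ha2inv : a2⁻¹ = sl2 2⁻¹ (-0) (-0) 2 (by norm_num) := by rw [ha2def, sl2_inv]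
  have hb2inv : b2⁻¹ = C * a2⁻¹ * C⁻¹ := by
    rw [hb2def, _root_.mul_inv_rev, _root_.mul_inv_rev, inv_inv, mul_assoc]
  have hMcoe : (↑M : Matrix (Fin 2) (Fin 2) ℂ) =
      !![1 + 27*u/4 + 27*u^2/4, -9*u - 27*u^2/4;
         -9/16 + 9*u/8 + 27*u^2/16, 1 - 27*u/16 - 27*u^2/16] := by
    rw [hMdef, hb2inv, hb2def, ha2inv, hCinv, ha2def, hCdef]
    simp only [Matrix.SpecialLinearGroup.coe_mul, sl2_coe]
    simp only [Matrix.mul_fin_two]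
    ext i j
    fin_cases i <;> fin_cases j <;> simp <;> ring
  have hMtr : (↑M : Matrix (Fin 2) (Fin 2) ℂ) 0 0 + (↑M : Matrix (Fin 2) (Fin 2) ℂ) 1 1
      = τ := by
    rw [hMcoe]
    simp
    linear_combination (81/16 : ℂ) * hu
  have hMnc : (↑M : Matrix (Fin 2) (Fin 2) ℂ) 0 1 ≠ 0 ∨
      (↑M : Matrix (Fin 2) (Fin 2) ℂ) 1 0 ≠ 0 ∨
      (↑M : Matrix (Fin 2) (Fin 2) ℂ) 0 0 ≠ (↑M : Matrix (Fin 2) (Fin 2) ℂ) 1 1 := by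
    by_contra hcon
    push_neg at hcon
    obtain ⟨E1, E2, E3⟩ := hcon
    rw [hMcoe] at E1 E2 E3
    simp at E1 E2 E3
    have e1 : u ^ 2 + u = 0 := by linear_combination (16/135 : ℂ) * E3
    have e2 : 3 * u ^ 2 + 4 * u = 0 := by linear_combination (-4/9 : ℂ) * E1
    have e3 : 3 * u ^ 2 + 2 * u - 1 = 0 := by linear_combination (16/9 : ℂ) * E2
    have : (1 : ℂ) = 0 := by linear_combination 6 * e1 - e2 - e3
    exact one_ne_zero this
  obtain ⟨Q, hQ⟩ := conj_to_companion M hMnc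
  rw [hMtr] at hQ
  refine ⟨(P * Q⁻¹) * x₀ * (P * Q⁻¹)⁻¹, (P * Q⁻¹) * y₀ * (P * Q⁻¹)⁻¹, Or.inl ?_⟩
  have key : ((P * Q⁻¹) * x₀ * (P * Q⁻¹)⁻¹) ^ m * ((P * Q⁻¹) * y₀ * (P * Q⁻¹)⁻¹) ^ n *
      (((P * Q⁻¹) * x₀ * (P * Q⁻¹)⁻¹) ^ m)⁻¹ * (((P * Q⁻¹) * y₀ * (P * Q⁻¹)⁻¹) ^ n)⁻¹ = g := by
    rw [conj_pow', conj_pow', hx, hy]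
    calc (P * Q⁻¹) * a2 * (P * Q⁻¹)⁻¹ * ((P * Q⁻¹) * b2 * (P * Q⁻¹)⁻¹) *
          ((P * Q⁻¹) * a2 * (P * Q⁻¹)⁻¹)⁻¹ * ((P * Q⁻¹) * b2 * (P * Q⁻¹)⁻¹)⁻¹
        = (P * Q⁻¹) * M * (P * Q⁻¹)⁻¹ := by rw [hMdef]; group
      _ = (P * Q⁻¹) * (Q * compSL τ * Q⁻¹) * (P * Q⁻¹)⁻¹ := by rw [← hQ]
      _ = P * compSL τ * P⁻¹ := by group
      _ = g := by rw [hP, hτ]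
  rw [key]
end

section
/- Let p be a prime number. For every g ∈ SL_2(ℂ) there exist x, y ∈ SL_2(ℂ) such that (x·y·x⁻¹·y⁻¹)^p = g or (x·y·x⁻¹·y⁻¹)^p = −g. Equivalently, the word map on PSL_2(ℂ) = SL_2(ℂ)/{±I} induced by the word w = ⁅x,y⁆^p is surjective. -/
open Matrix

namespace CommPowAux

abbrev SL2 := Matrix.SpecialLinearGroup (Fin 2) ℂ

lemma fin_two_ext {a b c d e f g h : ℂ} (h1 : a = e) (h2 : b = f) (h3 : c = g)
    (h4 : d = h) : !![a, b; c, d] = !![e, f; g, h] := by rw [h1, h2, h3, h4]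

lemma neg_fin_two (a b c d : ℂ) : -(!![a, b; c, d]) = !![-a, -b; -c, -d] := by
  ext i j
  fin_cases i <;> fin_cases j <;> simp

lemma coe_inv_eq (A : SL2) (B : Matrix (Fin 2) (Fin 2) ℂ)
    (h : (A : Matrix (Fin 2) (Fin 2) ℂ) * B = 1) :
    ((A⁻¹ : SL2) : Matrix (Fin 2) (Fin 2) ℂ) = B := by
  calc ((A⁻¹ : SL2) : Matrix (Fin 2) (Fin 2) ℂ)
      = ((A⁻¹ : SL2) : Matrix (Fin 2) (Fin 2) ℂ) * ((A : Matrix (Fin 2) (Fin 2) ℂ) * B) := by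
        rw [h, mul_one]
    _ = (((A⁻¹ * A : SL2)) : Matrix (Fin 2) (Fin 2) ℂ) * B := by
        rw [Matrix.SpecialLinearGroup.coe_mul, mul_assoc]
    _ = B := by rw [inv_mul_cancel, Matrix.SpecialLinearGroup.coe_one, one_mul]

lemma diag_pow (a d : ℂ) (n : ℕ) : (!![a, 0; 0, d]) ^ n = !![a ^ n, 0; 0, d ^ n] := by
  induction n with
  | zero => simp [Matrix.one_fin_two]
  | succ k ih =>
      rw [pow_succ, ih, Matrix.mul_fin_two]
      exact fin_two_ext (by ring) (by ring) (by ring) (by ring)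

lemma unip_pow (c : ℂ) (n : ℕ) : (!![1, c; 0, 1]) ^ n = !![1, (n : ℂ) * c; 0, 1] := by
  induction n with
  | zero => simp [Matrix.one_fin_two]
  | succ k ih =>
      rw [pow_succ, ih, Matrix.mul_fin_two]
      exact fin_two_ext (by ring) (by push_cast; ring) (by ring) (by ring)

lemma conj_pow (C C' M : Matrix (Fin 2) (Fin 2) ℂ) (h1 : C * C' = 1) (h2 : C' * C = 1)
    (n : ℕ) : (C * M * C') ^ n = C * M ^ n * C' := by
  induction n with
  | zero => simp [h1]
  | succ k ih =>
      rw [pow_succ, ih, pow_succ]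
      calc C * M ^ k * C' * (C * M * C') = C * (M ^ k * ((C' * C) * (M * C'))) := by
            simp only [mul_assoc]
        _ = C * (M ^ k * M) * C' := by rw [h2, one_mul]; simp only [mul_assoc]

lemma transfer (p : ℕ) (g T C C' : Matrix (Fin 2) (Fin 2) ℂ)
    (h1 : C * C' = 1) (h2 : C' * C = 1) (hT : C' * g * C = T)
    (hex : ∃ x y : SL2,
      (↑((x * y * x⁻¹ * y⁻¹) ^ p) : Matrix (Fin 2) (Fin 2) ℂ) = T ∨
      (↑((x * y * x⁻¹ * y⁻¹) ^ p) : Matrix (Fin 2) (Fin 2) ℂ) = -T) :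
    ∃ x y : SL2,
      (↑((x * y * x⁻¹ * y⁻¹) ^ p) : Matrix (Fin 2) (Fin 2) ℂ) = g ∨
      (↑((x * y * x⁻¹ * y⁻¹) ^ p) : Matrix (Fin 2) (Fin 2) ℂ) = -g := by
  obtain ⟨x, y, hxy⟩ := hex
  have hdet : ∀ A : SL2, (C * (A : Matrix (Fin 2) (Fin 2) ℂ) * C').det = 1 := by
    intro A
    rw [Matrix.det_mul, Matrix.det_mul, A.2, mul_one, ← Matrix.det_mul, h1, Matrix.det_one]
  have hcc : ∀ z : Matrix (Fin 2) (Fin 2) ℂ, C' * (C * z) = z := fun z => by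
    rw [← mul_assoc, h2, one_mul]
  refine ⟨⟨C * (x : Matrix (Fin 2) (Fin 2) ℂ) * C', hdet x⟩,
          ⟨C * (y : Matrix (Fin 2) (Fin 2) ℂ) * C', hdet y⟩, ?_⟩
  set x' : SL2 := ⟨C * (x : Matrix (Fin 2) (Fin 2) ℂ) * C', hdet x⟩ with hx'
  set y' : SL2 := ⟨C * (y : Matrix (Fin 2) (Fin 2) ℂ) * C', hdet y⟩ with hy'
  have hx'c : (x' : Matrix (Fin 2) (Fin 2) ℂ) = C * (x : Matrix (Fin 2) (Fin 2) ℂ) * C' := rfl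
  have hy'c : (y' : Matrix (Fin 2) (Fin 2) ℂ) = C * (y : Matrix (Fin 2) (Fin 2) ℂ) * C' := rfl
  have hxinv : ((x'⁻¹ : SL2) : Matrix (Fin 2) (Fin 2) ℂ)
      = C * ((x⁻¹ : SL2) : Matrix (Fin 2) (Fin 2) ℂ) * C' := by
    apply coe_inv_eq
    rw [hx'c]
    calc C * (x : Matrix (Fin 2) (Fin 2) ℂ) * C'
          * (C * ((x⁻¹ : SL2) : Matrix (Fin 2) (Fin 2) ℂ) * C')
        = C * ((x : Matrix (Fin 2) (Fin 2) ℂ)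
            * ((x⁻¹ : SL2) : Matrix (Fin 2) (Fin 2) ℂ) * C') := by
          simp only [mul_assoc, hcc]
      _ = 1 := by
          rw [← Matrix.SpecialLinearGroup.coe_mul, mul_inv_cancel,
            Matrix.SpecialLinearGroup.coe_one, one_mul, h1]
  have hyinv : ((y'⁻¹ : SL2) : Matrix (Fin 2) (Fin 2) ℂ)
      = C * ((y⁻¹ : SL2) : Matrix (Fin 2) (Fin 2) ℂ) * C' := by
    apply coe_inv_eq
    rw [hy'c]
    calc C * (y : Matrix (Fin 2) (Fin 2) ℂ) * C'
          * (C * ((y⁻¹ : SL2) : Matrix (Fin 2) (Fin 2) ℂ) * C')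
        = C * ((y : Matrix (Fin 2) (Fin 2) ℂ)
            * ((y⁻¹ : SL2) : Matrix (Fin 2) (Fin 2) ℂ) * C') := by
          simp only [mul_assoc, hcc]
      _ = 1 := by
          rw [← Matrix.SpecialLinearGroup.coe_mul, mul_inv_cancel,
            Matrix.SpecialLinearGroup.coe_one, one_mul, h1]
  have hW : ((x' * y' * x'⁻¹ * y'⁻¹ : SL2) : Matrix (Fin 2) (Fin 2) ℂ)
      = C * ((x * y * x⁻¹ * y⁻¹ : SL2) : Matrix (Fin 2) (Fin 2) ℂ) * C' := by
    simp only [Matrix.SpecialLinearGroup.coe_mul, hxinv, hyinv, hx'c, hy'c]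
    simp only [mul_assoc, hcc]
  have hWp : ((((x' * y' * x'⁻¹ * y'⁻¹) ^ p : SL2)) : Matrix (Fin 2) (Fin 2) ℂ)
      = C * (((x * y * x⁻¹ * y⁻¹) ^ p : SL2) : Matrix (Fin 2) (Fin 2) ℂ) * C' := by
    rw [Matrix.SpecialLinearGroup.coe_pow, hW, conj_pow C C' _ h1 h2,
      ← Matrix.SpecialLinearGroup.coe_pow]
  have hg : C * T * C' = g := by
    rw [← hT]
    calc C * (C' * g * C) * C' = C * C' * g * (C * C') := by simp only [mul_assoc]
      _ = g := by rw [h1, one_mul, mul_one]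
  rcases hxy with h | h
  · exact Or.inl (by rw [hWp, h, hg])
  · refine Or.inr ?_
    rw [hWp, h, ← hg]
    simp only [mul_neg, neg_mul]

lemma diag_case (p : ℕ) (hp : 0 < p) (lam mu : ℂ) (h : lam * mu = 1) :
    ∃ x y : SL2, (↑((x * y * x⁻¹ * y⁻¹) ^ p) : Matrix (Fin 2) (Fin 2) ℂ)
      = !![lam, 0; 0, mu] := by
  obtain ⟨ν, hν⟩ := IsAlgClosed.exists_pow_nat_eq lam (n := 2 * p) (by positivity)
  have hlam0 : lam ≠ 0 := left_ne_zero_of_mul_eq_one h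
  have hν0 : ν ≠ 0 := by
    rintro rfl
    rw [← hν, zero_pow (by omega : 2 * p ≠ 0)] at hlam0
    exact hlam0 rfl
  have hdx : (!![ν, 0; 0, ν⁻¹]).det = 1 := by
    rw [Matrix.det_fin_two_of]; field_simp; ring
  have hdy : (!![0, 1; -1, 0] : Matrix (Fin 2) (Fin 2) ℂ).det = 1 := by
    rw [Matrix.det_fin_two_of]; ring
  set x : SL2 := ⟨_, hdx⟩ with hxdef
  set y : SL2 := ⟨_, hdy⟩ with hydef
  have hxc : (x : Matrix (Fin 2) (Fin 2) ℂ) = !![ν, 0; 0, ν⁻¹] := rfl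
  have hyc : (y : Matrix (Fin 2) (Fin 2) ℂ) = !![0, 1; -1, 0] := rfl
  have hxi : ((x⁻¹ : SL2) : Matrix (Fin 2) (Fin 2) ℂ) = !![ν⁻¹, 0; 0, ν] := by
    apply coe_inv_eq
    rw [hxc, Matrix.mul_fin_two, Matrix.one_fin_two]
    exact fin_two_ext (by field_simp; ring) (by ring) (by ring) (by field_simp; ring)
  have hyi : ((y⁻¹ : SL2) : Matrix (Fin 2) (Fin 2) ℂ) = !![0, -1; 1, 0] := by
    apply coe_inv_eq
    rw [hyc, Matrix.mul_fin_two, Matrix.one_fin_two]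
    exact fin_two_ext (by ring) (by ring) (by ring) (by ring)
  have hcom : ((x * y * x⁻¹ * y⁻¹ : SL2) : Matrix (Fin 2) (Fin 2) ℂ)
      = !![ν ^ 2, 0; 0, (ν⁻¹) ^ 2] := by
    simp only [Matrix.SpecialLinearGroup.coe_mul, hxc, hyc, hxi, hyi]
    rw [Matrix.mul_fin_two, Matrix.mul_fin_two, Matrix.mul_fin_two]
    exact fin_two_ext (by ring) (by ring) (by ring) (by ring)
  refine ⟨x, y, ?_⟩
  rw [Matrix.SpecialLinearGroup.coe_pow, hcom, diag_pow]
  refine fin_two_ext ?_ rfl rfl ?_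
  · rw [← pow_mul]; exact hν
  · rw [← pow_mul, inv_pow, hν]
    exact inv_eq_of_mul_eq_one_right h

lemma unip_case (p : ℕ) (hp : (p : ℂ) ≠ 0) (β : ℂ) :
    ∃ x y : SL2, (↑((x * y * x⁻¹ * y⁻¹) ^ p) : Matrix (Fin 2) (Fin 2) ℂ)
      = !![1, β; 0, 1] := by
  set c : ℂ := β / (3 * p) with hc
  have hdx : (!![(2 : ℂ), 0; 0, 2⁻¹]).det = 1 := by
    rw [Matrix.det_fin_two_of]; norm_num
  have hdy : (!![1, c; 0, 1] : Matrix (Fin 2) (Fin 2) ℂ).det = 1 := by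
    rw [Matrix.det_fin_two_of]; ring
  set x : SL2 := ⟨_, hdx⟩ with hxdef
  set y : SL2 := ⟨_, hdy⟩ with hydef
  have hxc : (x : Matrix (Fin 2) (Fin 2) ℂ) = !![(2 : ℂ), 0; 0, 2⁻¹] := rfl
  have hyc : (y : Matrix (Fin 2) (Fin 2) ℂ) = !![1, c; 0, 1] := rfl
  have hxi : ((x⁻¹ : SL2) : Matrix (Fin 2) (Fin 2) ℂ) = !![(2 : ℂ)⁻¹, 0; 0, 2] := by
    apply coe_inv_eq
    rw [hxc, Matrix.mul_fin_two, Matrix.one_fin_two]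
    exact fin_two_ext (by norm_num) (by ring) (by ring) (by norm_num)
  have hyi : ((y⁻¹ : SL2) : Matrix (Fin 2) (Fin 2) ℂ) = !![1, -c; 0, 1] := by
    apply coe_inv_eq
    rw [hyc, Matrix.mul_fin_two, Matrix.one_fin_two]
    exact fin_two_ext (by ring) (by ring) (by ring) (by ring)
  have hcom : ((x * y * x⁻¹ * y⁻¹ : SL2) : Matrix (Fin 2) (Fin 2) ℂ)
      = !![1, 3 * c; 0, 1] := by
    simp only [Matrix.SpecialLinearGroup.coe_mul, hxc, hyc, hxi, hyi]
    rw [Matrix.mul_fin_two, Matrix.mul_fin_two, Matrix.mul_fin_two]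
    exact fin_two_ext (by norm_num) (by norm_num; ring) (by ring) (by norm_num)
  refine ⟨x, y, ?_⟩
  rw [Matrix.SpecialLinearGroup.coe_pow, hcom, unip_pow]
  refine fin_two_ext rfl ?_ rfl rfl
  rw [hc]; field_simp

lemma triangularize (g : Matrix (Fin 2) (Fin 2) ℂ) (hg : g.det = 1) :
    ∃ (C C' : Matrix (Fin 2) (Fin 2) ℂ) (lam β : ℂ), lam ≠ 0 ∧ C * C' = 1 ∧ C' * C = 1 ∧
      C' * g * C = !![lam, β; 0, lam⁻¹] := by
  have hg' : g 0 0 * g 1 1 - g 0 1 * g 1 0 = 1 := by rw [← Matrix.det_fin_two]; exact hg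
  set a := g 0 0 with ha
  set b := g 0 1 with hb'
  set c := g 1 0 with hc
  set d := g 1 1 with hd
  by_cases hb : b = 0
  · -- g is lower triangular; conjugate by the swap matrix
    have had : a * d = 1 := by rw [hb] at hg'; linear_combination hg'
    have hd0 : d ≠ 0 := right_ne_zero_of_mul_eq_one had
    refine ⟨!![0, 1; 1, 0], !![0, 1; 1, 0], d, c, hd0, ?_, ?_, ?_⟩
    · rw [Matrix.mul_fin_two, Matrix.one_fin_two]
      exact fin_two_ext (by ring) (by ring) (by ring) (by ring)
    · rw [Matrix.mul_fin_two, Matrix.one_fin_two]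
      exact fin_two_ext (by ring) (by ring) (by ring) (by ring)
    · rw [Matrix.eta_fin_two g, ← ha, ← hb', ← hc, ← hd,
        Matrix.mul_fin_two, Matrix.mul_fin_two]
      refine fin_two_ext (by ring) (by ring) (by rw [hb]; ring) ?_
      field_simp
      linear_combination had
  · -- b ≠ 0 : use an eigenvector (b, lam - a)
    obtain ⟨s, hs⟩ := IsAlgClosed.exists_pow_nat_eq ((a + d) ^ 2 - 4) (n := 2) (by norm_num)
    set lam : ℂ := (a + d + s) / 2 with hlam
    set mu : ℂ := (a + d - s) / 2 with hmu
    have hbb : b * b⁻¹ = 1 := mul_inv_cancel₀ hb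
    have hlm : lam * mu = 1 := by
      rw [hlam, hmu]
      linear_combination (-(1/4) : ℂ) * hs
    have hlam0 : lam ≠ 0 := left_ne_zero_of_mul_eq_one hlm
    have hquad : lam * lam - (a + d) * lam + 1 = 0 := by
      rw [hlam]
      linear_combination ((1/4) : ℂ) * hs
    refine ⟨!![b, 0; lam - a, 1], !![b⁻¹, 0; -(lam - a) * b⁻¹, 1], lam,
      b⁻¹ * b, hlam0, ?_, ?_, ?_⟩
    · rw [Matrix.mul_fin_two, Matrix.one_fin_two]
      exact fin_two_ext (by field_simp; ring) (by ring) (by field_simp; ring) (by ring)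
    · rw [Matrix.mul_fin_two, Matrix.one_fin_two]
      exact fin_two_ext (by field_simp; ring) (by ring) (by field_simp; ring) (by ring)
    · rw [Matrix.eta_fin_two g, ← ha, ← hb', ← hc, ← hd,
        Matrix.mul_fin_two, Matrix.mul_fin_two]
      refine fin_two_ext ?_ (by ring) ?_ ?_
      · linear_combination lam * hbb
      · linear_combination (-(lam - a) * a - (lam - a) ^ 2) * hbb - hquad - hg'
      · linear_combination (a - lam) * hbb - lam⁻¹ * hquad
          + (lam - (a + d)) * (mul_inv_cancel₀ hlam0)

end CommPowAux

/-- Surjectivity of the word map `w = ⁅x,y⁆ᵖ` on `PSL₂(ℂ)` for a prime `p`: for every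
`g ∈ SL₂(ℂ)` there are `x, y` with `⁅x,y⁆ᵖ = ±g`. -/
theorem commutator_power_word_map_surjective_PSL2C (p : ℕ) (hp : p.Prime)
    (g : Matrix.SpecialLinearGroup (Fin 2) ℂ) :
    ∃ x y : Matrix.SpecialLinearGroup (Fin 2) ℂ,
      (↑((x * y * x⁻¹ * y⁻¹) ^ p) : Matrix (Fin 2) (Fin 2) ℂ)
          = (↑g : Matrix (Fin 2) (Fin 2) ℂ) ∨
      (↑((x * y * x⁻¹ * y⁻¹) ^ p) : Matrix (Fin 2) (Fin 2) ℂ)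
          = -(↑g : Matrix (Fin 2) (Fin 2) ℂ) := by
  classical
  have hp0 : 0 < p := hp.pos
  have hpC : (p : ℂ) ≠ 0 := Nat.cast_ne_zero.mpr hp.ne_zero
  obtain ⟨C, C', lam, β, hlam0, h1, h2, hT⟩ :=
    CommPowAux.triangularize (g : Matrix (Fin 2) (Fin 2) ℂ) g.2
  refine CommPowAux.transfer p _ _ C C' h1 h2 hT ?_
  by_cases hsq : lam * lam = 1
  · have hinv : lam⁻¹ = lam := inv_eq_of_mul_eq_one_right hsq
    rcases mul_self_eq_one_iff.mp hsq with hl | hl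
    · -- lam = 1 : the target is unipotent
      obtain ⟨x, y, hxy⟩ := CommPowAux.unip_case p hpC β
      refine ⟨x, y, Or.inl ?_⟩
      rw [hxy, hinv, hl]
    · -- lam = -1 : the negative of the target is unipotent
      obtain ⟨x, y, hxy⟩ := CommPowAux.unip_case p hpC (-β)
      refine ⟨x, y, Or.inr ?_⟩
      rw [hxy, hinv, hl, CommPowAux.neg_fin_two]
      exact CommPowAux.fin_two_ext (by ring) (by ring) (by ring) (by ring)
  · -- lam ≠ ±1 : kill the off-diagonal entry and use the diagonal case
    have hne : lam⁻¹ - lam ≠ 0 := by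
      intro h0
      apply hsq
      have h3 : lam⁻¹ = lam := sub_eq_zero.mp h0
      nth_rewrite 1 [← h3]
      exact inv_mul_cancel₀ hlam0
    set k : ℂ := β / (lam⁻¹ - lam) with hk
    refine CommPowAux.transfer p _ (!![lam, 0; 0, lam⁻¹]) !![1, k; 0, 1] !![1, -k; 0, 1]
      ?_ ?_ ?_ ?_
    · rw [Matrix.mul_fin_two, Matrix.one_fin_two]
      exact CommPowAux.fin_two_ext (by ring) (by ring) (by ring) (by ring)
    · rw [Matrix.mul_fin_two, Matrix.one_fin_two]
      exact CommPowAux.fin_two_ext (by ring) (by ring) (by ring) (by ring)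
    · rw [Matrix.mul_fin_two, Matrix.mul_fin_two]
      refine CommPowAux.fin_two_ext (by ring) ?_ (by ring) (by ring)
      have hk' : k * (lam⁻¹ - lam) = β := div_mul_cancel₀ _ hne
      linear_combination -hk'
    · obtain ⟨x, y, hxy⟩ := CommPowAux.diag_case p hp0 lam lam⁻¹ (mul_inv_cancel₀ hlam0)
      exact ⟨x, y, Or.inl hxy⟩
end

section
/- For every g ∈ SL_2(ℂ) there exist x, y ∈ SL_2(ℂ) such that, setting z = x·y·x⁻¹·y⁻¹, one has z·(x·z·x⁻¹)·z⁻¹·(x·z⁻¹·x⁻¹) = g or z·(x·z·x⁻¹)·z⁻¹·(x·z⁻¹·x⁻¹) = −g. Equivalently, the word map on PSL_2(ℂ) = SL_2(ℂ)/{±I} induced by the word w(x,y) = ⁅⁅x,y⁆, x⁅x,y⁆x⁻¹⁆ is surjective. -/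
open Matrix Polynomial

local notation "SL2" => Matrix.SpecialLinearGroup (Fin 2) ℂ

private lemma exists_sqrtC (c : ℂ) : ∃ r : ℂ, r ^ 2 = c :=
  IsAlgClosed.exists_pow_nat_eq c two_pos

private lemma quintic_root (τ : ℂ) (hτ : τ ≠ 2) :
    ∃ u : ℂ, u ≠ 0 ∧ u ≠ 1 ∧ u^5 - u^4 - 2*u^3 + τ*u^2 + u - 1 = 0 := by
  obtain ⟨u, hu⟩ := Complex.exists_root (f := X^5 - X^4 - C 2 * X^3 + C τ * X^2 + X - C 1)
    (by have : (X^5 - X^4 - C 2 * X^3 + C τ * X^2 + X - C 1 : ℂ[X]).degree = 5 := by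
          compute_degree!
        rw [this]; norm_num)
  have he : u^5 - u^4 - 2*u^3 + τ*u^2 + u - 1 = 0 := by
    have h2 := hu
    simp [IsRoot] at h2
    linear_combination h2
  refine ⟨u, ?_, ?_, he⟩
  · rintro rfl; simp at he
  · rintro rfl; apply hτ; linear_combination he

private lemma exists_conj_companion (A : SL2) (τ : ℂ)
    (htr : (A : Matrix (Fin 2) (Fin 2) ℂ) 0 0 + (A : Matrix (Fin 2) (Fin 2) ℂ) 1 1 = τ)
    (hA : ¬((A : Matrix (Fin 2) (Fin 2) ℂ) 0 1 = 0 ∧ (A : Matrix (Fin 2) (Fin 2) ℂ) 1 0 = 0 ∧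
      (A : Matrix (Fin 2) (Fin 2) ℂ) 0 0 = (A : Matrix (Fin 2) (Fin 2) ℂ) 1 1)) :
    ∃ h : SL2, (↑(h * A * h⁻¹) : Matrix (Fin 2) (Fin 2) ℂ) = !![0, -1; 1, τ] := by
  obtain ⟨a, b, c, d, hm, hdet⟩ :
      ∃ a b c d : ℂ, (A : Matrix (Fin 2) (Fin 2) ℂ) = !![a, b; c, d] ∧ a * d - b * c = 1 := by
    refine ⟨_, _, _, _, Matrix.eta_fin_two _, ?_⟩
    have := A.prop
    rwa [Matrix.det_fin_two] at this
  rw [hm] at htr hA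
  simp at htr hA
  by_cases hc : c = 0
  · by_cases hb : b = 0
    · -- diagonal case
      have had : a ≠ d := fun h => hA hb hc h
      obtain ⟨r, hr⟩ := exists_sqrtC (d - a)
      have hrne : r ≠ 0 := by
        rintro rfl; exact had (by linear_combination hr)
      obtain ⟨ρ, hρ⟩ : ∃ ρ : ℂ, r * ρ = 1 := ⟨r⁻¹, mul_inv_cancel₀ hrne⟩
      subst hb hc
      refine ⟨(⟨!![d*ρ, -(a*ρ); -ρ, ρ], by
        rw [Matrix.det_fin_two_of]; linear_combination (-ρ^2)*hr + (r*ρ+1)*hρ⟩ : SL2), ?_⟩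
      erw [Matrix.SpecialLinearGroup.coe_mul, Matrix.SpecialLinearGroup.coe_mul,
        Matrix.SpecialLinearGroup.coe_inv, Matrix.SpecialLinearGroup.coe_mk, hm,
        Matrix.adjugate_fin_two_of]
      ext i j
      fin_cases i <;> fin_cases j <;> simp only [Matrix.mul_apply, Fin.sum_univ_two,
        Matrix.of_apply, Matrix.cons_val', Matrix.cons_val_zero, Matrix.cons_val_one,
        Matrix.head_cons, Matrix.empty_val', Matrix.cons_val_fin_one, Matrix.head_fin_const,
        Fin.isValue, Fin.zero_eta, Fin.mk_one] <;>
        first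
          | ring1
          | linear_combination (ρ^2*(a-d))*hdet + ρ^2*hr + (-(r*ρ+1))*hρ
          | linear_combination (-ρ^2)*hr + (r*ρ+1)*hρ
          | linear_combination (-(ρ^2*(a+d)))*hr + ((a+d)*(r*ρ+1))*hρ + htr
    · -- c = 0, b ≠ 0
      obtain ⟨r, hr⟩ := exists_sqrtC (-b)
      have hrne : r ≠ 0 := by
        rintro rfl; exact hb (by linear_combination hr)
      obtain ⟨ρ, hρ⟩ : ∃ ρ : ℂ, r * ρ = 1 := ⟨r⁻¹, mul_inv_cancel₀ hrne⟩
      subst hc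
      refine ⟨(⟨!![d*ρ, -(b*ρ); -ρ, 0], by
        rw [Matrix.det_fin_two_of]; linear_combination (r*ρ+1)*hρ - ρ^2*hr⟩ : SL2), ?_⟩
      erw [Matrix.SpecialLinearGroup.coe_mul, Matrix.SpecialLinearGroup.coe_mul,
        Matrix.SpecialLinearGroup.coe_inv, Matrix.SpecialLinearGroup.coe_mk, hm,
        Matrix.adjugate_fin_two_of]
      ext i j
      fin_cases i <;> fin_cases j <;> simp only [Matrix.mul_apply, Fin.sum_univ_two,
        Matrix.of_apply, Matrix.cons_val', Matrix.cons_val_zero, Matrix.cons_val_one,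
        Matrix.head_cons, Matrix.empty_val', Matrix.cons_val_fin_one, Matrix.head_fin_const,
        Fin.isValue, Fin.zero_eta, Fin.mk_one] <;>
        first
          | ring1
          | linear_combination (b*ρ^2)*hdet + (-(r*ρ+1))*hρ + ρ^2*hr
          | linear_combination (r*ρ+1)*hρ - ρ^2*hr
          | linear_combination htr + (-((a+d)*ρ^2))*hr + ((a+d)*(r*ρ+1))*hρ
  · -- c ≠ 0
    obtain ⟨r, hr⟩ := exists_sqrtC c
    have hrne : r ≠ 0 := by
      rintro rfl; exact hc (by linear_combination -hr)
    obtain ⟨ρ, hρ⟩ : ∃ ρ : ℂ, r * ρ = 1 := ⟨r⁻¹, mul_inv_cancel₀ hrne⟩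
    refine ⟨(⟨!![r, -(a*ρ); 0, ρ], by
      rw [Matrix.det_fin_two_of]; linear_combination hρ⟩ : SL2), ?_⟩
    erw [Matrix.SpecialLinearGroup.coe_mul, Matrix.SpecialLinearGroup.coe_mul,
      Matrix.SpecialLinearGroup.coe_inv, Matrix.SpecialLinearGroup.coe_mk, hm,
      Matrix.adjugate_fin_two_of]
    ext i j
    fin_cases i <;> fin_cases j <;> simp only [Matrix.mul_apply, Fin.sum_univ_two,
      Matrix.of_apply, Matrix.cons_val', Matrix.cons_val_zero, Matrix.cons_val_one,
      Matrix.head_cons, Matrix.empty_val', Matrix.cons_val_fin_one, Matrix.head_fin_const,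
      Fin.isValue, Fin.zero_eta, Fin.mk_one] <;>
      first
        | ring1
        | linear_combination (-(a*r*ρ))*hρ + (a*ρ^2)*hr
        | linear_combination (-(a^2*r*ρ) - a*d)*hρ + (a^2*ρ^2 + b)*hr + (-1)*hdet
        | linear_combination (-ρ^2)*hr + (r*ρ+1)*hρ
        | linear_combination htr + (a*(r*ρ+1)+d)*hρ + (-(a*ρ^2))*hr

private lemma nonscalar_of_tr (A : SL2) (τ : ℂ)
    (ht : (A : Matrix (Fin 2) (Fin 2) ℂ) 0 0 + (A : Matrix (Fin 2) (Fin 2) ℂ) 1 1 = τ)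
    (h2 : τ ≠ 2) (hm2 : τ ≠ -2) :
    ¬((A : Matrix (Fin 2) (Fin 2) ℂ) 0 1 = 0 ∧ (A : Matrix (Fin 2) (Fin 2) ℂ) 1 0 = 0 ∧
      (A : Matrix (Fin 2) (Fin 2) ℂ) 0 0 = (A : Matrix (Fin 2) (Fin 2) ℂ) 1 1) := by
  rintro ⟨e1, e2, e3⟩
  have hd := A.prop
  rw [Matrix.det_fin_two, e1, e2, e3] at hd
  rw [e3] at ht
  rcases mul_self_eq_one_iff.mp (by linear_combination hd) with h | h
  · exact h2 (by rw [h] at ht; linear_combination -ht)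
  · exact hm2 (by rw [h] at ht; linear_combination -ht)

private def wordOf (x y : SL2) : SL2 :=
  (x*y*x⁻¹*y⁻¹) * (x*(x*y*x⁻¹*y⁻¹)*x⁻¹) * (x*y*x⁻¹*y⁻¹)⁻¹ * (x*(x*y*x⁻¹*y⁻¹)⁻¹*x⁻¹)

private lemma conj_solution (g x y h : SL2) (heq : h * wordOf x y * h⁻¹ = g) (z : SL2)
    (hz : z = (h*x*h⁻¹) * (h*y*h⁻¹) * (h*x*h⁻¹)⁻¹ * (h*y*h⁻¹)⁻¹) :
    z * ((h*x*h⁻¹) * z * (h*x*h⁻¹)⁻¹) * z⁻¹ * ((h*x*h⁻¹) * z⁻¹ * (h*x*h⁻¹)⁻¹) = g := by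
  subst hz; rw [← heq, wordOf]; group

private lemma generic_word (u s σ v w : ℂ) (hs : s*σ = 1) (hs2 : s^2 = u)
    (hv : (u-1)*v = 1) (hw : u*w = 1) :
    ∃ x y : SL2, (↑(wordOf x y) : Matrix (Fin 2) (Fin 2) ℂ) =
      !![(1+u)^2*(1-w) + w^2, (1+u)*((u-1)*(1+u)^2 + w - u^2);
         (1+u)*(1-u)*w,       (1-u)*(1+u)^2 + u^2] := by
  refine ⟨⟨!![s, 0; 0, σ], by rw [Matrix.det_fin_two_of]; linear_combination hs⟩,
          ⟨!![v, 1; -(u*v), -1], by rw [Matrix.det_fin_two_of]; linear_combination hv⟩, ?_⟩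
  set x : SL2 := ⟨!![s, 0; 0, σ], by rw [Matrix.det_fin_two_of]; linear_combination hs⟩ with hxdef
  set y : SL2 := ⟨!![v, 1; -(u*v), -1], by rw [Matrix.det_fin_two_of]; linear_combination hv⟩
    with hydef
  have hx : (↑x : Matrix (Fin 2) (Fin 2) ℂ) = !![s, 0; 0, σ] := rfl
  have hxi : (↑(x⁻¹) : Matrix (Fin 2) (Fin 2) ℂ) = !![σ, 0; 0, s] := by
    rw [Matrix.SpecialLinearGroup.coe_inv, hx, Matrix.adjugate_fin_two_of]; norm_num
  have hy : (↑y : Matrix (Fin 2) (Fin 2) ℂ) = !![v, 1; -(u*v), -1] := rfl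
  have hyi : (↑(y⁻¹) : Matrix (Fin 2) (Fin 2) ℂ) = !![-1, -1; u*v, v] := by
    rw [Matrix.SpecialLinearGroup.coe_inv, hy, Matrix.adjugate_fin_two_of]; norm_num
  have hz : (↑(x*y*x⁻¹*y⁻¹) : Matrix (Fin 2) (Fin 2) ℂ) = !![1+u, 1; -1, 0] := by
    erw [Matrix.SpecialLinearGroup.coe_mul, Matrix.SpecialLinearGroup.coe_mul,
      Matrix.SpecialLinearGroup.coe_mul, hx, hy, hxi, hyi]
    ext i j
    fin_cases i <;> fin_cases j <;> simp only [Matrix.mul_apply, Fin.sum_univ_two,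
      Matrix.of_apply, Matrix.cons_val', Matrix.cons_val_zero, Matrix.cons_val_one,
      Matrix.head_cons, Matrix.empty_val', Matrix.cons_val_fin_one, Matrix.head_fin_const,
      Fin.isValue, Fin.zero_eta, Fin.mk_one] <;>
      first
        | ring1
        | linear_combination (-v)*hs + (u*v)*hs2 + (1+u)*hv
        | linear_combination (-v)*hs + v*hs2 + hv
        | linear_combination (v - u*v + s*σ*v)*hs + (-(σ^2*v))*hs2 + (-1)*hv
        | linear_combination (s*σ*v)*hs + (-(σ^2*v))*hs2
  have hzi : (↑((x*y*x⁻¹*y⁻¹)⁻¹) : Matrix (Fin 2) (Fin 2) ℂ) = !![0, -1; 1, 1+u] := by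
    rw [Matrix.SpecialLinearGroup.coe_inv, hz, Matrix.adjugate_fin_two_of]; norm_num
  rw [wordOf]
  set zel := x*y*x⁻¹*y⁻¹ with hzel
  simp only [Matrix.SpecialLinearGroup.coe_mul, hz, hzi, hx, hxi]
  ext i j
  fin_cases i <;> fin_cases j <;> simp only [Matrix.mul_apply, Fin.sum_univ_two,
    Matrix.of_apply, Matrix.cons_val', Matrix.cons_val_zero, Matrix.cons_val_one,
    Matrix.head_cons, Matrix.empty_val', Matrix.cons_val_fin_one, Matrix.head_fin_const,
    Fin.isValue, Fin.zero_eta, Fin.mk_one] <;>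
    first
      | linear_combination (-1 - w + w^2 + u + u^2 - σ^2 + σ^2*w - 2*σ^2*u - σ^2*u^2 - s*σ
            - s*σ*w + s*σ*w^2 + s*σ*u + s*σ*u^2 + s*σ^3*w)*hs
          + (2*σ^2 + σ^2*w - σ^2*w^2 + σ^2*u - σ^4*w)*hs2
          + (2 + u + σ^2 - σ^2*w - σ^4)*hw
      | linear_combination (w - 3*u - 3*u^2 - u^3 + σ^2 + σ^2*u + s*σ*w - 3*s*σ*u - 3*s*σ*u^2
            - s*σ*u^3 + s^2 + 3*s^2*u + 3*s^2*u^2 + s^2*u^3)*hs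
          + (1 + 2*u + 2*u^2 + u^3 - σ^2 - σ^2*w - s^2 - s^2*u)*hs2
          + (-1 - σ^2)*hw
      | linear_combination (w - u + σ^2 + σ^2*u + s*σ*w - s*σ*u)*hs
          + (-(σ^2) - σ^2*w)*hs2 + (u - σ^2)*hw
      | linear_combination (1 + 2*u + u^2 + s*σ + 2*s*σ*u + s*σ*u^2 - s^2 - 2*s^2*u
            - s^2*u^2)*hs + (-1 - u - u^2 + s^2)*hs2

private lemma parabolic_word (s σ : ℂ) (hs : s*σ = 1) (hs2 : s^2 = 2) :
    ∃ x y : SL2, (↑(wordOf x y) : Matrix (Fin 2) (Fin 2) ℂ) = !![1, 1; 0, 1] := by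
  refine ⟨⟨!![s, 0; 0, σ], by rw [Matrix.det_fin_two_of]; linear_combination hs⟩,
          ⟨!![1/6, 1; -1, 0], by rw [Matrix.det_fin_two_of]; norm_num⟩, ?_⟩
  set x : SL2 := ⟨!![s, 0; 0, σ], by rw [Matrix.det_fin_two_of]; linear_combination hs⟩
  set y : SL2 := ⟨!![1/6, 1; -1, 0], by rw [Matrix.det_fin_two_of]; norm_num⟩
  have hx : (↑x : Matrix (Fin 2) (Fin 2) ℂ) = !![s, 0; 0, σ] := rfl
  have hxi : (↑(x⁻¹) : Matrix (Fin 2) (Fin 2) ℂ) = !![σ, 0; 0, s] := by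
    rw [Matrix.SpecialLinearGroup.coe_inv, hx, Matrix.adjugate_fin_two_of]; norm_num
  have hy : (↑y : Matrix (Fin 2) (Fin 2) ℂ) = !![1/6, 1; -1, 0] := rfl
  have hyi : (↑(y⁻¹) : Matrix (Fin 2) (Fin 2) ℂ) = !![0, -1; 1, 1/6] := by
    rw [Matrix.SpecialLinearGroup.coe_inv, hy, Matrix.adjugate_fin_two_of]; norm_num
  have hz : (↑(x*y*x⁻¹*y⁻¹) : Matrix (Fin 2) (Fin 2) ℂ) = !![2, 1/6; 0, 1/2] := by
    erw [Matrix.SpecialLinearGroup.coe_mul, Matrix.SpecialLinearGroup.coe_mul,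
      Matrix.SpecialLinearGroup.coe_mul, hx, hy, hxi, hyi]
    ext i j
    fin_cases i <;> fin_cases j <;> simp only [Matrix.mul_apply, Fin.sum_univ_two,
      Matrix.of_apply, Matrix.cons_val', Matrix.cons_val_zero, Matrix.cons_val_one,
      Matrix.head_cons, Matrix.empty_val', Matrix.cons_val_fin_one, Matrix.head_fin_const,
      Fin.isValue, Fin.zero_eta, Fin.mk_one] <;>
      first
        | ring1
        | linear_combination hs2
        | linear_combination (-1/6 : ℂ)*hs + (1/6 : ℂ)*hs2
        | linear_combination (1/2 + 1/2*s*σ)*hs + (-1/2*σ^2)*hs2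
  have hzi : (↑((x*y*x⁻¹*y⁻¹)⁻¹) : Matrix (Fin 2) (Fin 2) ℂ) = !![1/2, -(1/6); 0, 2] := by
    rw [Matrix.SpecialLinearGroup.coe_inv, hz, Matrix.adjugate_fin_two_of]; norm_num
  rw [wordOf]
  set zel := x*y*x⁻¹*y⁻¹ with hzel
  simp only [Matrix.SpecialLinearGroup.coe_mul, hz, hzi, hx, hxi]
  ext i j
  fin_cases i <;> fin_cases j <;> simp only [Matrix.mul_apply, Fin.sum_univ_two,
    Matrix.of_apply, Matrix.cons_val', Matrix.cons_val_zero, Matrix.cons_val_one,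
    Matrix.head_cons, Matrix.empty_val', Matrix.cons_val_fin_one, Matrix.head_fin_const,
    Fin.isValue, Fin.zero_eta, Fin.mk_one] <;>
    first
      | ring1
      | linear_combination (1 + s*σ)*hs
      | linear_combination (-1 - s*σ + s^2)*hs + hs2

/-- Surjectivity on `PSL₂(ℂ)` of the word map induced by
`w(x,y) = ⁅⁅x,y⁆, x⁅x,y⁆x⁻¹⁆`: for every `g ∈ SL₂(ℂ)` there are `x, y ∈ SL₂(ℂ)` such that,
with `z = ⁅x,y⁆`, the element `z (x z x⁻¹) z⁻¹ (x z⁻¹ x⁻¹)` equals `g` or `-g`. -/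
theorem double_commutator_word_map_surjective_PSL2C (g : Matrix.SpecialLinearGroup (Fin 2) ℂ) :
    ∃ x y : Matrix.SpecialLinearGroup (Fin 2) ℂ, ∀ z : Matrix.SpecialLinearGroup (Fin 2) ℂ,
      z = x * y * x⁻¹ * y⁻¹ →
      ((↑(z * (x * z * x⁻¹) * z⁻¹ * (x * z⁻¹ * x⁻¹)) : Matrix (Fin 2) (Fin 2) ℂ)
          = (↑g : Matrix (Fin 2) (Fin 2) ℂ) ∨
       (↑(z * (x * z * x⁻¹) * z⁻¹ * (x * z⁻¹ * x⁻¹)) : Matrix (Fin 2) (Fin 2) ℂ)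
          = -(↑g : Matrix (Fin 2) (Fin 2) ℂ)) := by
  obtain ⟨a, b, c, d, hm, hdet⟩ :
      ∃ a b c d : ℂ, (g : Matrix (Fin 2) (Fin 2) ℂ) = !![a, b; c, d] ∧ a * d - b * c = 1 := by
    refine ⟨_, _, _, _, Matrix.eta_fin_two _, ?_⟩
    have := g.prop
    rwa [Matrix.det_fin_two] at this
  have e00 : (g : Matrix (Fin 2) (Fin 2) ℂ) 0 0 = a := by rw [hm]; simp
  have e01 : (g : Matrix (Fin 2) (Fin 2) ℂ) 0 1 = b := by rw [hm]; simp
  have e10 : (g : Matrix (Fin 2) (Fin 2) ℂ) 1 0 = c := by rw [hm]; simp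
  have e11 : (g : Matrix (Fin 2) (Fin 2) ℂ) 1 1 = d := by rw [hm]; simp
  by_cases hsc : b = 0 ∧ c = 0 ∧ a = d
  · -- scalar case : g = ±1
    obtain ⟨hb, hc, had⟩ := hsc
    have ha2 : a * a = 1 := by linear_combination hdet + a*had + c*hb
    refine ⟨1, 1, ?_⟩
    intro z hz
    have hz1 : z = 1 := by simpa using hz
    subst hz1
    have hone : (↑((1 : SL2) * (1 * 1 * 1⁻¹) * 1⁻¹ * (1 * 1⁻¹ * 1⁻¹)) :
        Matrix (Fin 2) (Fin 2) ℂ) = 1 := by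
      norm_num
    rcases mul_self_eq_one_iff.mp ha2 with h1 | h1
    · left
      rw [hone, hm, Matrix.one_fin_two, hb, hc, ← had, h1]
    · right
      rw [hone, hm, Matrix.one_fin_two, hb, hc, ← had, h1]
      norm_num
  · -- non-scalar case
    have hnsg : ¬((g : Matrix (Fin 2) (Fin 2) ℂ) 0 1 = 0 ∧
        (g : Matrix (Fin 2) (Fin 2) ℂ) 1 0 = 0 ∧
        (g : Matrix (Fin 2) (Fin 2) ℂ) 0 0 = (g : Matrix (Fin 2) (Fin 2) ℂ) 1 1) := by
      rw [e00, e01, e10, e11]; exact hsc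
    by_cases h2 : a + d = 2
    · -- parabolic, target g
      obtain ⟨s, hs2⟩ := exists_sqrtC 2
      have hsne : s ≠ 0 := by rintro rfl; norm_num at hs2
      obtain ⟨x, y, hW⟩ := parabolic_word s s⁻¹ (mul_inv_cancel₀ hsne) hs2
      have htrW : (↑(wordOf x y) : Matrix (Fin 2) (Fin 2) ℂ) 0 0 +
          (↑(wordOf x y) : Matrix (Fin 2) (Fin 2) ℂ) 1 1 = 2 := by
        rw [hW]; norm_num
      have hnsW : ¬((↑(wordOf x y) : Matrix (Fin 2) (Fin 2) ℂ) 0 1 = 0 ∧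
          (↑(wordOf x y) : Matrix (Fin 2) (Fin 2) ℂ) 1 0 = 0 ∧
          (↑(wordOf x y) : Matrix (Fin 2) (Fin 2) ℂ) 0 0 =
            (↑(wordOf x y) : Matrix (Fin 2) (Fin 2) ℂ) 1 1) := by
        rintro ⟨e, -, -⟩
        rw [hW] at e
        norm_num at e
      obtain ⟨h₁, hh₁⟩ := exists_conj_companion (wordOf x y) 2 htrW hnsW
      obtain ⟨h₂, hh₂⟩ := exists_conj_companion g 2 (by rw [e00, e11, h2]) hnsg
      have hcc : h₁ * wordOf x y * h₁⁻¹ = h₂ * g * h₂⁻¹ :=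
        Subtype.coe_injective (hh₁.trans hh₂.symm)
      have heq : (h₂⁻¹*h₁) * wordOf x y * (h₂⁻¹*h₁)⁻¹ = g := by
        rw [show (h₂⁻¹*h₁) * wordOf x y * (h₂⁻¹*h₁)⁻¹
            = h₂⁻¹ * (h₁ * wordOf x y * h₁⁻¹) * h₂ by group, hcc]
        group
      refine ⟨(h₂⁻¹*h₁)*x*(h₂⁻¹*h₁)⁻¹, (h₂⁻¹*h₁)*y*(h₂⁻¹*h₁)⁻¹, ?_⟩
      intro z hz
      exact Or.inl (congrArg Subtype.val (conj_solution g x y (h₂⁻¹*h₁) heq z hz))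
    · by_cases hm2 : a + d = -2
      · -- parabolic, target -g
        have hdetneg : Matrix.det (-(g : Matrix (Fin 2) (Fin 2) ℂ)) = 1 := by
          simp [Matrix.det_neg, g.prop]
        set g' : SL2 := ⟨-(g : Matrix (Fin 2) (Fin 2) ℂ), hdetneg⟩ with hg'
        have hg'c : (↑g' : Matrix (Fin 2) (Fin 2) ℂ) = -(g : Matrix (Fin 2) (Fin 2) ℂ) := rfl
        have htrg' : (↑g' : Matrix (Fin 2) (Fin 2) ℂ) 0 0 +
            (↑g' : Matrix (Fin 2) (Fin 2) ℂ) 1 1 = 2 := by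
          rw [hg'c]
          simp only [Matrix.neg_apply, e00, e11]
          linear_combination -hm2
        have hnsg' : ¬((↑g' : Matrix (Fin 2) (Fin 2) ℂ) 0 1 = 0 ∧
            (↑g' : Matrix (Fin 2) (Fin 2) ℂ) 1 0 = 0 ∧
            (↑g' : Matrix (Fin 2) (Fin 2) ℂ) 0 0 = (↑g' : Matrix (Fin 2) (Fin 2) ℂ) 1 1) := by
          rw [hg'c]
          simp only [Matrix.neg_apply, e00, e01, e10, e11, neg_eq_zero, neg_inj]
          exact hsc
        obtain ⟨s, hs2⟩ := exists_sqrtC 2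
        have hsne : s ≠ 0 := by rintro rfl; norm_num at hs2
        obtain ⟨x, y, hW⟩ := parabolic_word s s⁻¹ (mul_inv_cancel₀ hsne) hs2
        have htrW : (↑(wordOf x y) : Matrix (Fin 2) (Fin 2) ℂ) 0 0 +
            (↑(wordOf x y) : Matrix (Fin 2) (Fin 2) ℂ) 1 1 = 2 := by
          rw [hW]; norm_num
        have hnsW : ¬((↑(wordOf x y) : Matrix (Fin 2) (Fin 2) ℂ) 0 1 = 0 ∧
            (↑(wordOf x y) : Matrix (Fin 2) (Fin 2) ℂ) 1 0 = 0 ∧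
            (↑(wordOf x y) : Matrix (Fin 2) (Fin 2) ℂ) 0 0 =
              (↑(wordOf x y) : Matrix (Fin 2) (Fin 2) ℂ) 1 1) := by
          rintro ⟨e, -, -⟩
          rw [hW] at e
          norm_num at e
        obtain ⟨h₁, hh₁⟩ := exists_conj_companion (wordOf x y) 2 htrW hnsW
        obtain ⟨h₂, hh₂⟩ := exists_conj_companion g' 2 htrg' hnsg'
        have hcc : h₁ * wordOf x y * h₁⁻¹ = h₂ * g' * h₂⁻¹ :=
          Subtype.coe_injective (hh₁.trans hh₂.symm)
        have heq : (h₂⁻¹*h₁) * wordOf x y * (h₂⁻¹*h₁)⁻¹ = g' := by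
          rw [show (h₂⁻¹*h₁) * wordOf x y * (h₂⁻¹*h₁)⁻¹
              = h₂⁻¹ * (h₁ * wordOf x y * h₁⁻¹) * h₂ by group, hcc]
          group
        refine ⟨(h₂⁻¹*h₁)*x*(h₂⁻¹*h₁)⁻¹, (h₂⁻¹*h₁)*y*(h₂⁻¹*h₁)⁻¹, ?_⟩
        intro z hz
        exact Or.inr (congrArg Subtype.val (conj_solution g' x y (h₂⁻¹*h₁) heq z hz))
      · -- generic case : trace ≠ ±2
        obtain ⟨u, hu0, hu1, hq⟩ := quintic_root (a + d) h2
        obtain ⟨s, hs2⟩ := exists_sqrtC u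
        have hsne : s ≠ 0 := by rintro rfl; exact hu0 (by linear_combination -hs2)
        obtain ⟨x, y, hW⟩ := generic_word u s s⁻¹ (u-1)⁻¹ u⁻¹ (mul_inv_cancel₀ hsne) hs2
          (mul_inv_cancel₀ (sub_ne_zero.mpr hu1)) (mul_inv_cancel₀ hu0)
        set w : ℂ := u⁻¹ with hwdef
        have hw : u * w = 1 := mul_inv_cancel₀ hu0
        have htrW : (↑(wordOf x y) : Matrix (Fin 2) (Fin 2) ℂ) 0 0 +
            (↑(wordOf x y) : Matrix (Fin 2) (Fin 2) ℂ) 1 1 = a + d := by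
          rw [hW]
          simp only [Matrix.of_apply, Matrix.cons_val', Matrix.cons_val_zero,
            Matrix.cons_val_one, Matrix.head_cons, Matrix.empty_val',
            Matrix.cons_val_fin_one, Matrix.head_fin_const]
          linear_combination (-2 + (a+d) + w - 3*u + u*w*(a+d) - u^2 - 2*u^2*w + u^3
            - u^3*w + u^4*w)*hw + (-(w^2))*hq
        have hnsW := nonscalar_of_tr (wordOf x y) (a+d) htrW h2 hm2
        obtain ⟨h₁, hh₁⟩ := exists_conj_companion (wordOf x y) (a+d) htrW hnsW
        obtain ⟨h₂, hh₂⟩ := exists_conj_companion g (a+d) (by rw [e00, e11]) hnsg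
        have hcc : h₁ * wordOf x y * h₁⁻¹ = h₂ * g * h₂⁻¹ :=
          Subtype.coe_injective (hh₁.trans hh₂.symm)
        have heq : (h₂⁻¹*h₁) * wordOf x y * (h₂⁻¹*h₁)⁻¹ = g := by
          rw [show (h₂⁻¹*h₁) * wordOf x y * (h₂⁻¹*h₁)⁻¹
              = h₂⁻¹ * (h₁ * wordOf x y * h₁⁻¹) * h₂ by group, hcc]
          group
        refine ⟨(h₂⁻¹*h₁)*x*(h₂⁻¹*h₁)⁻¹, (h₂⁻¹*h₁)*y*(h₂⁻¹*h₁)⁻¹, ?_⟩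
        intro z hz
        exact Or.inl (congrArg Subtype.val (conj_solution g x y (h₂⁻¹*h₁) heq z hz))
end
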